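/- arXiv:1212.5576 — 4 statements merged into one kernel-verified Lean document; each statement's English description precedes it below -/
import Mathlib

section
/- (Lemma on Z^V, generalizing Lemma 2 of Odell–Schlumprecht–Zsák:) Let V be a Banach space with a normalized 1-unconditional basis (v_n) which satisfies subsequential C-V-lower block estimates in itself, and let Z be a Banach space with FDD (E_n). Then (E_n) satisfies subsequential 2C-V-lower block estimates in Z^V; concretely: if (z_n) is a sequence of nonzero finitely supported vectors of Z with max supp z_n < min supp z_{n+1} and ‖z_n‖_{Z^V} = 1 for all n, and m_n = min supp z_n, then ‖Σ a_n v_{m_n}‖_V ≤ 2C · ‖Σ a_n z_n‖_{Z^V} for every finitely supported real sequence (a_n). -/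
open Filter Topology Metric

noncomputable section

/-! ### Finite dimensional decompositions (indexed by `ℕ`) -/

/-- A finite dimensional decomposition of `Z`: nonzero finite-dimensional subspaces `E n`
such that every `z` has a unique norm-convergent representation `z = Σ_n z_n`, `z_n ∈ E n`,
together with the (automatically continuous) coordinate projections. -/
structure FDD (Z : Type*) [NormedAddCommGroup Z] [NormedSpace ℝ Z] where
  E : ℕ → Submodule ℝ Z
  nontrivial : ∀ n, E n ≠ ⊥
  finiteDim : ∀ n, FiniteDimensional ℝ (E n)
  proj : ℕ → Z →L[ℝ] Z
  proj_mem : ∀ n z, proj n z ∈ E n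
  proj_sum : ∀ z : Z,
    Filter.Tendsto (fun N => ∑ n ∈ Finset.range N, proj n z) Filter.atTop (nhds z)
  rep_unique : ∀ (z : Z) (f : ℕ → Z), (∀ n, f n ∈ E n) →
    Filter.Tendsto (fun N => ∑ n ∈ Finset.range N, f n) Filter.atTop (nhds z) →
    ∀ n, f n = proj n z

namespace FDD

variable {Z : Type*} [NormedAddCommGroup Z] [NormedSpace ℝ Z] (F : FDD Z)

/-- The support of a vector with respect to an FDD. -/
def supp (z : Z) : Set ℕ := {n | F.proj n z ≠ 0}

/-- The minimum of the support. -/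
def minSupp (z : Z) : ℕ := sInf (F.supp z)

/-- The maximum of the support. -/
def maxSupp (z : Z) : ℕ := sSup (F.supp z)

/-- A block sequence with respect to an FDD: nonzero, finitely supported vectors with
successive supports. -/
def IsBlockSeq (z : ℕ → Z) : Prop :=
  (∀ n, z n ≠ 0) ∧ (∀ n, (F.supp (z n)).Finite) ∧
    ∀ n, ∀ i ∈ F.supp (z n), ∀ j ∈ F.supp (z (n + 1)), i < j

/-- Bimonotonicity: all interval projections have norm at most one. -/
def Bimonotone : Prop := ∀ a b : ℕ, ‖∑ i ∈ Finset.Icc a b, F.proj i‖ ≤ 1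

/-- A shrinking FDD. -/
def Shrinking : Prop :=
  ∀ f : Z →L[ℝ] ℝ,
    Filter.Tendsto
      (fun N => ‖f.comp (ContinuousLinearMap.id ℝ Z - ∑ i ∈ Finset.range N, F.proj i)‖)
      Filter.atTop (nhds 0)

/-- A boundedly-complete FDD. -/
def BoundedlyComplete : Prop :=
  ∀ f : ℕ → Z, (∀ n, f n ∈ F.E n) →
    BddAbove (Set.range fun N => ‖∑ n ∈ Finset.range N, f n‖) →
    ∃ z : Z, Filter.Tendsto (fun N => ∑ n ∈ Finset.range N, f n) Filter.atTop (nhds z)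

end FDD

/-- `(x_n)` is `C`-dominated by `(y_n)`. -/
def DominatedBy {X : Type*} {Y : Type*} [NormedAddCommGroup X] [Module ℝ X]
    [NormedAddCommGroup Y] [Module ℝ Y] (C : ℝ) (x : ℕ → X) (y : ℕ → Y) : Prop :=
  ∀ a : ℕ →₀ ℝ, ‖a.sum fun n r => r • x n‖ ≤ C * ‖a.sum fun n r => r • y n‖

/-- Upper block estimates, with constant `C`, with respect to a sequence `w`. -/
def FDD.UpperBlockEst {Z V : Type*} [NormedAddCommGroup Z] [NormedSpace ℝ Z]
    [NormedAddCommGroup V] [Module ℝ V] (F : FDD Z) (w : ℕ → V) (C : ℝ) : Prop :=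
  ∀ z : ℕ → Z, F.IsBlockSeq z → (∀ n, ‖z n‖ = 1) →
    DominatedBy C z fun n => w (F.minSupp (z n))

/-- Lower block estimates, with constant `C`, with respect to a sequence `w`. -/
def FDD.LowerBlockEst {Z V : Type*} [NormedAddCommGroup Z] [NormedSpace ℝ Z]
    [NormedAddCommGroup V] [Module ℝ V] (F : FDD Z) (w : ℕ → V) (C : ℝ) : Prop :=
  ∀ z : ℕ → Z, F.IsBlockSeq z → (∀ n, ‖z n‖ = 1) →
    DominatedBy C (fun n => w (F.minSupp (z n))) z

/-! ### Schauder bases -/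

/-- A Schauder basis of `V`, bundled with its (automatically continuous) coordinate
functionals. -/
structure RSchauderBasis (V : Type*) [NormedAddCommGroup V] [NormedSpace ℝ V] where
  v : ℕ → V
  coord : ℕ → V →L[ℝ] ℝ
  biorth : ∀ n m, coord n (v m) = if n = m then (1 : ℝ) else 0
  expand : ∀ x : V,
    Filter.Tendsto (fun N => ∑ n ∈ Finset.range N, coord n x • v n) Filter.atTop (nhds x)

/-- A block sequence of basis vectors, described by its (finitely supported) coefficients:
nonzero with successive supports. -/
def IsCoeffBlockSeq (a : ℕ → ℕ →₀ ℝ) : Prop :=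
  (∀ n, a n ≠ 0) ∧ ∀ n, ∀ i ∈ (a n).support, ∀ j ∈ (a (n + 1)).support, i < j

namespace RSchauderBasis

variable {V : Type*} [NormedAddCommGroup V] [NormedSpace ℝ V] (B : RSchauderBasis V)

/-- The vector `Σ_n a_n v_n` for finitely supported coefficients. -/
def vec (a : ℕ →₀ ℝ) : V := a.sum fun n r => r • B.v n

/-- The basis is normalized. -/
def Normalized : Prop := ∀ n, ‖B.v n‖ = 1

/-- The basis is `1`-unconditional. -/
def Unconditional : Prop :=
  ∀ a b : ℕ →₀ ℝ, (∀ n, |a n| ≤ |b n|) → ‖B.vec a‖ ≤ ‖B.vec b‖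

/-- The basis is shrinking. -/
def Shrinking : Prop :=
  ∀ f : V →L[ℝ] ℝ,
    Filter.Tendsto
      (fun N => sSup {r : ℝ | ∃ x ∈ closure (Submodule.span ℝ (B.v '' Set.Ici N) : Set V),
        ‖x‖ ≤ 1 ∧ r = |f x|})
      Filter.atTop (nhds 0)

/-- `D`-right dominance. -/
def RightDominant (D : ℝ) : Prop :=
  ∀ k l : ℕ → ℕ, StrictMono k → StrictMono l → (∀ n, k n ≤ l n) →
    DominatedBy D (fun n => B.v (k n)) fun n => B.v (l n)


/-- The basis satisfies subsequential `C`-`V`-upper block estimates in `V` itself. -/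
def UpperBlockEstSelf (C : ℝ) : Prop :=
  ∀ a : ℕ → ℕ →₀ ℝ, ∀ h : IsCoeffBlockSeq a, (∀ n, ‖B.vec (a n)‖ = 1) →
    DominatedBy C (fun n => B.vec (a n)) fun n =>
      B.v ((a n).support.min' (Finsupp.support_nonempty_iff.mpr (h.1 n)))

/-- The basis satisfies subsequential `C`-`V`-lower block estimates in `V` itself. -/
def LowerBlockEstSelf (C : ℝ) : Prop :=
  ∀ a : ℕ → ℕ →₀ ℝ, ∀ h : IsCoeffBlockSeq a, (∀ n, ‖B.vec (a n)‖ = 1) →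
    DominatedBy C
      (fun n => B.v ((a n).support.min' (Finsupp.support_nonempty_iff.mpr (h.1 n))))
      fun n => B.vec (a n)

end RSchauderBasis


/-- The `Z^V` norm of a (finitely supported) vector of `Z`. -/
def ZVnorm {V : Type*} [NormedAddCommGroup V] [NormedSpace ℝ V]
    {Z : Type*} [NormedAddCommGroup Z] [NormedSpace ℝ Z]
    (B : RSchauderBasis V) (F : FDD Z) (z : Z) : ℝ :=
  sSup {r : ℝ | ∃ (n : ℕ) (m : ℕ → ℕ), StrictMono m ∧
    r = ‖∑ i ∈ Finset.range n,
          ‖∑ j ∈ Finset.Ico (m i) (m (i + 1)), F.proj j z‖ • B.v (m i)‖}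


section Aux

variable {V : Type*} [NormedAddCommGroup V] [NormedSpace ℝ V]
variable {Z : Type*} [NormedAddCommGroup Z] [NormedSpace ℝ Z]

namespace FDD
variable (F : FDD Z)

theorem proj_proj (k n : ℕ) (z : Z) :
    F.proj n (F.proj k z) = if n = k then F.proj k z else 0 := by
  refine (F.rep_unique (F.proj k z) (fun n => if n = k then F.proj k z else 0) ?_ ?_ n).symm
  · intro n
    by_cases h : n = k
    · subst h; simp [F.proj_mem]
    · simp [h]
  · refine Filter.Tendsto.congr' ?_ tendsto_const_nhds
    filter_upwards [Filter.eventually_gt_atTop k] with N hN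
    rw [Finset.sum_ite_eq' (Finset.range N) k, if_pos (Finset.mem_range.mpr hN)]

theorem eq_sum_proj (z : Z) (s : Finset ℕ) (hs : ∀ j, F.proj j z ≠ 0 → j ∈ s) :
    ∑ j ∈ s, F.proj j z = z := by
  have h2 : Filter.Tendsto (fun N => ∑ n ∈ Finset.range N, F.proj n z) Filter.atTop
      (nhds (∑ j ∈ s, F.proj j z)) := by
    refine Filter.Tendsto.congr' ?_ tendsto_const_nhds
    filter_upwards [Filter.eventually_gt_atTop (s.sup id)] with N hN
    refine Finset.sum_subset (fun j hj => Finset.mem_range.mpr ?_) ?_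
    · exact lt_of_le_of_lt (Finset.le_sup (f := id) hj) hN
    · intro x _ hx
      by_contra h
      exact hx (hs x h)
  exact tendsto_nhds_unique h2 (F.proj_sum z)

theorem supp_nonempty (z : Z) (hz : z ≠ 0) : (F.supp z).Nonempty := by
  rw [Set.nonempty_iff_ne_empty]
  intro h
  apply hz
  have h2 := F.eq_sum_proj z ∅ (fun j hj => absurd (show j ∈ F.supp z from hj)
    (by simp [h]))
  simpa using h2.symm

theorem minSupp_mem (z : Z) (hz : z ≠ 0) : F.minSupp z ∈ F.supp z :=
  Nat.sInf_mem (F.supp_nonempty z hz)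

theorem minSupp_le (z : Z) {j : ℕ} (hj : j ∈ F.supp z) : F.minSupp z ≤ j :=
  Nat.sInf_le hj

theorem le_maxSupp (z : Z) (hfin : (F.supp z).Finite) {j : ℕ} (hj : j ∈ F.supp z) :
    j ≤ F.maxSupp z :=
  le_csSup hfin.bddAbove hj

theorem maxSupp_mem (z : Z) (hz : z ≠ 0) (hfin : (F.supp z).Finite) :
    F.maxSupp z ∈ F.supp z :=
  Nat.sSup_mem (F.supp_nonempty z hz) hfin.bddAbove

/-- Interval projection. -/
def Pint (a b : ℕ) (z : Z) : Z := ∑ j ∈ Finset.Ico a b, F.proj j z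

theorem Pint_eq_sum_inter (a b : ℕ) (z : Z) (s : Finset ℕ) (hs : ∀ j, F.proj j z ≠ 0 → j ∈ s) :
    F.Pint a b z = ∑ j ∈ s ∩ Finset.Ico a b, F.proj j z := by
  refine (Finset.sum_subset Finset.inter_subset_right ?_).symm
  intro x hx hxn
  by_contra h
  exact hxn (Finset.mem_inter.mpr ⟨hs x h, hx⟩)

theorem Pint_congr {a b a' b' : ℕ} (z : Z) (hfin : (F.supp z).Finite)
    (h : F.supp z ∩ Set.Ico a b = F.supp z ∩ Set.Ico a' b') :
    F.Pint a b z = F.Pint a' b' z := by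
  rw [F.Pint_eq_sum_inter a b z hfin.toFinset (fun j hj => hfin.mem_toFinset.mpr hj),
      F.Pint_eq_sum_inter a' b' z hfin.toFinset (fun j hj => hfin.mem_toFinset.mpr hj)]
  congr 1
  ext j
  have := Set.ext_iff.mp h j
  simp only [Set.mem_inter_iff, Set.mem_Ico] at this
  simp only [Finset.mem_inter, Finset.mem_Ico, Set.Finite.mem_toFinset]
  constructor
  · rintro ⟨h1, h2⟩; exact ⟨h1, (this.mp ⟨h1, h2⟩).2⟩
  · rintro ⟨h1, h2⟩; exact ⟨h1, (this.mpr ⟨h1, h2⟩).2⟩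

theorem Pint_eq_zero (a b : ℕ) (z : Z) (h : ∀ j, a ≤ j → j < b → F.proj j z = 0) :
    F.Pint a b z = 0 :=
  Finset.sum_eq_zero fun j hj => h j (Finset.mem_Ico.mp hj).1 (Finset.mem_Ico.mp hj).2

theorem proj_Pint (a b j : ℕ) (z : Z) :
    F.proj j (F.Pint a b z) = if j ∈ Finset.Ico a b then F.proj j z else 0 := by
  rw [Pint, map_sum]
  rw [Finset.sum_congr rfl (fun t _ => F.proj_proj t j z)]
  rw [Finset.sum_ite_eq (Finset.Ico a b) j]

theorem Pint_ne_zero (a b : ℕ) (z : Z) {j : ℕ} (hja : a ≤ j) (hjb : j < b)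
    (hj : F.proj j z ≠ 0) : F.Pint a b z ≠ 0 := by
  intro h
  apply hj
  have := F.proj_Pint a b j z
  rw [h, map_zero, if_pos (Finset.mem_Ico.mpr ⟨hja, hjb⟩)] at this
  exact this.symm

theorem Pint_smul (a b : ℕ) (r : ℝ) (z : Z) : F.Pint a b (r • z) = r • F.Pint a b z := by
  simp [Pint, map_smul, Finset.smul_sum]

theorem Pint_finsupp_sum (a b : ℕ) (c : ℕ →₀ ℝ) (g : ℕ → Z) :
    F.Pint a b (c.sum fun n r => r • g n) = c.sum fun n r => r • F.Pint a b (g n) := by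
  classical
  rw [Finsupp.sum, Finsupp.sum]
  rw [show F.Pint a b = fun z => ∑ j ∈ Finset.Ico a b, F.proj j z from rfl]
  simp only [map_sum, map_smul]
  rw [Finset.sum_comm]
  simp [Finset.smul_sum]

end FDD

end Aux

section Aux2

variable {V : Type*} [NormedAddCommGroup V] [NormedSpace ℝ V]
variable {Z : Type*} [NormedAddCommGroup Z] [NormedSpace ℝ Z]

theorem vec_eq_lc (B : RSchauderBasis V) (c : ℕ →₀ ℝ) :
    B.vec c = Finsupp.linearCombination ℝ B.v c := by
  rw [Finsupp.linearCombination_apply]; rfl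

theorem vec_smul (B : RSchauderBasis V) (r : ℝ) (c : ℕ →₀ ℝ) :
    B.vec (r • c) = r • B.vec c := by
  simp [vec_eq_lc, map_smul]

theorem vec_single (B : RSchauderBasis V) (j : ℕ) (r : ℝ) :
    B.vec (Finsupp.single j r) = r • B.v j := by
  simp [vec_eq_lc, Finsupp.linearCombination_single]

theorem vec_finsupp_sum (B : RSchauderBasis V) (a : ℕ →₀ ℝ) (g : ℕ → ℕ →₀ ℝ) :
    B.vec (a.sum fun n r => r • g n) = a.sum fun n r => r • B.vec (g n) := by
  rw [vec_eq_lc, map_finsuppSum]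
  exact Finsupp.sum_congr fun n _ => by rw [map_smul, vec_eq_lc]

/-- The vector in `V` associated to a blocking of `z`. -/
def vecOf (B : RSchauderBasis V) (F : FDD Z) (z : Z) (k : ℕ) (m : ℕ → ℕ) : V :=
  ∑ i ∈ Finset.range k, ‖F.Pint (m i) (m (i + 1)) z‖ • B.v (m i)

/-- The coefficient finsupp of a blocking of `z`. -/
def coeffOf (F : FDD Z) (z : Z) (k : ℕ) (m : ℕ → ℕ) : ℕ →₀ ℝ :=
  ∑ i ∈ Finset.range k, Finsupp.single (m i) ‖F.Pint (m i) (m (i + 1)) z‖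

theorem vec_coeffOf (B : RSchauderBasis V) (F : FDD Z) (z : Z) (k : ℕ) (m : ℕ → ℕ) :
    B.vec (coeffOf F z k m) = vecOf B F z k m := by
  rw [coeffOf, vecOf, vec_eq_lc, map_sum]
  exact Finset.sum_congr rfl fun i _ => by rw [Finsupp.linearCombination_single]

theorem coeffOf_nonneg (F : FDD Z) (z : Z) (k : ℕ) (m : ℕ → ℕ) (j : ℕ) :
    0 ≤ coeffOf F z k m j := by
  rw [coeffOf, Finset.sum_apply']
  refine Finset.sum_nonneg fun i _ => ?_
  rw [Finsupp.single_apply]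
  split
  · exact norm_nonneg _
  · exact le_refl 0

theorem coeffOf_apply (F : FDD Z) (z : Z) (k : ℕ) {m : ℕ → ℕ} (hm : StrictMono m)
    {i : ℕ} (hi : i < k) :
    coeffOf F z k m (m i) = ‖F.Pint (m i) (m (i + 1)) z‖ := by
  rw [coeffOf, Finset.sum_apply']
  rw [Finset.sum_eq_single i]
  · rw [Finsupp.single_eq_same]
  · intro t _ ht
    rw [Finsupp.single_apply, if_neg (fun h => ht (hm.injective h))]
  · intro h
    exact absurd (Finset.mem_range.mpr hi) h

theorem coeffOf_eq_zero (F : FDD Z) (z : Z) (k : ℕ) {m : ℕ → ℕ} {j : ℕ}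
    (h : ∀ i, i < k → m i ≠ j) :
    coeffOf F z k m j = 0 := by
  rw [coeffOf, Finset.sum_apply']
  refine Finset.sum_eq_zero fun i hi => ?_
  rw [Finsupp.single_apply, if_neg (h i (Finset.mem_range.mp hi))]

/-- The set whose supremum is the `Z^V` norm. -/
def ZVset (B : RSchauderBasis V) (F : FDD Z) (z : Z) : Set ℝ :=
  {r : ℝ | ∃ (n : ℕ) (m : ℕ → ℕ), StrictMono m ∧
    r = ‖∑ i ∈ Finset.range n,
          ‖∑ j ∈ Finset.Ico (m i) (m (i + 1)), F.proj j z‖ • B.v (m i)‖}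

theorem ZVnorm_eq_sSup (B : RSchauderBasis V) (F : FDD Z) (z : Z) :
    ZVnorm B F z = sSup (ZVset B F z) := rfl

theorem vecOf_mem_ZVset (B : RSchauderBasis V) (F : FDD Z) (z : Z) (k : ℕ) {m : ℕ → ℕ}
    (hm : StrictMono m) : ‖vecOf B F z k m‖ ∈ ZVset B F z :=
  ⟨k, m, hm, rfl⟩

theorem ZVset_nonempty (B : RSchauderBasis V) (F : FDD Z) (z : Z) :
    (ZVset B F z).Nonempty :=
  ⟨_, vecOf_mem_ZVset B F z 0 strictMono_id⟩

theorem ZVset_bddAbove (B : RSchauderBasis V) (hN : B.Normalized) (F : FDD Z) (z : Z)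
    (hfin : (F.supp z).Finite) : BddAbove (ZVset B F z) := by
  classical
  refine ⟨∑ j ∈ hfin.toFinset, ‖F.proj j z‖, ?_⟩
  rintro r ⟨k, m, hm, rfl⟩
  have hmem : ∀ j, F.proj j z ≠ 0 → j ∈ hfin.toFinset := fun j hj =>
    hfin.mem_toFinset.mpr hj
  calc ‖∑ i ∈ Finset.range k,
        ‖∑ j ∈ Finset.Ico (m i) (m (i + 1)), F.proj j z‖ • B.v (m i)‖
      ≤ ∑ i ∈ Finset.range k,
        ‖(‖∑ j ∈ Finset.Ico (m i) (m (i + 1)), F.proj j z‖ • B.v (m i))‖ :=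
        norm_sum_le _ _
    _ = ∑ i ∈ Finset.range k, ‖F.Pint (m i) (m (i + 1)) z‖ := by
        refine Finset.sum_congr rfl fun i _ => ?_
        rw [norm_smul, hN (m i), mul_one, Real.norm_eq_abs, abs_norm]; rfl
    _ ≤ ∑ i ∈ Finset.range k,
        ∑ j ∈ hfin.toFinset ∩ Finset.Ico (m i) (m (i + 1)), ‖F.proj j z‖ := by
        refine Finset.sum_le_sum fun i _ => ?_
        rw [F.Pint_eq_sum_inter _ _ z hfin.toFinset hmem]
        exact norm_sum_le _ _
    _ = ∑ j ∈ (Finset.range k).biUnion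
          (fun i => hfin.toFinset ∩ Finset.Ico (m i) (m (i + 1))), ‖F.proj j z‖ := by
        refine (Finset.sum_biUnion ?_).symm
        intro i _ i' _ hii'
        rcases lt_or_gt_of_ne hii' with h | h
        · refine Finset.disjoint_left.mpr fun x hx hx' => ?_
          have h1 := (Finset.mem_Ico.mp (Finset.mem_inter.mp hx).2).2
          have h2 := (Finset.mem_Ico.mp (Finset.mem_inter.mp hx').2).1
          have : m (i + 1) ≤ m i' := hm.monotone h
          omega
        · refine Finset.disjoint_left.mpr fun x hx hx' => ?_
          have h1 := (Finset.mem_Ico.mp (Finset.mem_inter.mp hx').2).2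
          have h2 := (Finset.mem_Ico.mp (Finset.mem_inter.mp hx).2).1
          have : m (i' + 1) ≤ m i := hm.monotone h
          omega
    _ ≤ ∑ j ∈ hfin.toFinset, ‖F.proj j z‖ := by
        refine Finset.sum_le_sum_of_subset_of_nonneg ?_ (fun j _ _ => norm_nonneg _)
        intro j hj
        rcases Finset.mem_biUnion.mp hj with ⟨i, _, hji⟩
        exact (Finset.mem_inter.mp hji).1

theorem vecOf_le_ZVnorm (B : RSchauderBasis V) (hN : B.Normalized) (F : FDD Z) (z : Z)
    (hfin : (F.supp z).Finite) (k : ℕ) {m : ℕ → ℕ} (hm : StrictMono m) :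
    ‖vecOf B F z k m‖ ≤ ZVnorm B F z :=
  le_csSup (ZVset_bddAbove B hN F z hfin) (vecOf_mem_ZVset B F z k hm)

theorem ZVnorm_nonneg (B : RSchauderBasis V) (hN : B.Normalized) (F : FDD Z) (z : Z)
    (hfin : (F.supp z).Finite) : 0 ≤ ZVnorm B F z := by
  have h := vecOf_le_ZVnorm B hN F z hfin 0 strictMono_id
  simpa [vecOf] using h

theorem extend_mono (k : ℕ) (g : ℕ → ℕ) (hg : ∀ i, i < k → g i < g (i + 1)) :
    ∃ m : ℕ → ℕ, StrictMono m ∧ ∀ i, i ≤ k → m i = g i := by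
  refine ⟨fun i => if i ≤ k then g i else g k + (i - k), ?_, fun i hi => if_pos hi⟩
  refine strictMono_nat_of_lt_succ fun i => ?_
  rcases lt_trichotomy i k with h | h | h
  · rw [if_pos h.le, if_pos (show i + 1 ≤ k from h)]
    exact hg i h
  · subst h
    rw [if_pos (le_refl i), if_neg (by omega)]
    omega
  · rw [if_neg (by omega), if_neg (by omega)]
    omega

end Aux2

section Aux3

variable {V : Type*} [NormedAddCommGroup V] [NormedSpace ℝ V]
variable {Z : Type*} [NormedAddCommGroup Z] [NormedSpace ℝ Z]

theorem restrict_blocking (B : RSchauderBasis V) (F : FDD Z)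
    (hN : B.Normalized) (hU : B.Unconditional)
    (w : Z) (hw : w ≠ 0) (hfin : (F.supp w).Finite) (hZV : ZVnorm B F w = 1)
    (δ : ℝ) (hδ0 : 0 < δ) (hδ1 : δ ≤ 1 / 4) :
    ∃ (k : ℕ) (m : ℕ → ℕ), 1 ≤ k ∧ StrictMono m ∧ m 0 = F.minSupp w ∧
      1 / 2 - δ < ‖vecOf B F w k m‖ := by
  classical
  have hlt : (1 : ℝ) - δ < sSup (ZVset B F w) := by
    rw [← ZVnorm_eq_sSup, hZV]; linarith
  obtain ⟨r, hrmem, hrgt⟩ := exists_lt_of_lt_csSup (ZVset_nonempty B F w) hlt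
  obtain ⟨k, m, hm, hr⟩ := hrmem
  have hrv : r = ‖vecOf B F w k m‖ := hr
  set p := F.minSupp w with hp
  have hple : ∀ j, F.proj j w ≠ 0 → p ≤ j := fun j hj => F.minSupp_le w hj
  have hrpos : (0 : ℝ) < r := by linarith
  by_cases hcase : p < m 0
  · -- prepend a cut at `p`
    refine ⟨k + 1, fun i => if i = 0 then p else m (i - 1), by omega, ?_, by simp, ?_⟩
    · refine strictMono_nat_of_lt_succ fun i => ?_
      cases i with
      | zero => simpa using hcase
      | succ n =>
        simp only [Nat.succ_ne_zero, if_neg, Nat.add_sub_cancel]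
        exact hm (by omega)
    · have hnewC : coeffOf F w (k + 1) (fun i => if i = 0 then p else m (i - 1)) =
          Finsupp.single p ‖F.Pint p (m 0) w‖ + coeffOf F w k m := by
        rw [coeffOf, Finset.sum_range_succ']
        exact add_comm _ _
      have h1 := hU (coeffOf F w k m)
        (coeffOf F w (k + 1) (fun i => if i = 0 then p else m (i - 1))) ?_
      · rw [vec_coeffOf, vec_coeffOf] at h1
        linarith
      · intro j
        rw [hnewC, Finsupp.add_apply]
        have h0 : 0 ≤ coeffOf F w k m j := coeffOf_nonneg F w k m j
        have hs : 0 ≤ (Finsupp.single p ‖F.Pint p (m 0) w‖) j := by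
          rw [Finsupp.single_apply]
          split
          · exact norm_nonneg _
          · exact le_refl 0
        rw [abs_of_nonneg h0, abs_of_nonneg (by linarith)]
        linarith
  · -- `m 0 ≤ p`: drop the initial cuts and begin at `p`
    push_neg at hcase
    have hSb : BddAbove {i | m i ≤ p} := ⟨p, fun i hi => le_trans hm.le_apply hi⟩
    set i₀ := sSup {i | m i ≤ p} with hi₀def
    have hi₀ : m i₀ ≤ p := Nat.sSup_mem (s := {i | m i ≤ p}) ⟨0, hcase⟩ hSb
    have hi₀max : p < m (i₀ + 1) := by
      by_contra h
      have h1 : i₀ + 1 ∈ {i | m i ≤ p} := not_lt.mp h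
      have := le_csSup hSb h1
      omega
    have hzero : ∀ i, i < i₀ → ‖F.Pint (m i) (m (i + 1)) w‖ = 0 := by
      intro i hi
      rw [norm_eq_zero]
      refine F.Pint_eq_zero _ _ _ fun j h1 h2 => ?_
      by_contra hj
      have hj1 := hple j hj
      have hj2 : m (i + 1) ≤ m i₀ := hm.monotone (by omega)
      omega
    have hi₀k : i₀ < k := by
      by_contra h
      have hv : vecOf B F w k m = 0 := by
        refine Finset.sum_eq_zero fun i hi => ?_
        rw [hzero i (by
          have := Finset.mem_range.mp hi
          omega)]
        simp
      rw [hrv, hv, norm_zero] at hrpos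
      exact lt_irrefl _ hrpos
    set k' := k - i₀ with hk'def
    have hk' : 1 ≤ k' := by omega
    set m' : ℕ → ℕ := fun i => if i = 0 then p else m (i₀ + i) with hm'def
    have hm' : StrictMono m' := by
      refine strictMono_nat_of_lt_succ fun i => ?_
      cases i with
      | zero => simpa [hm'def] using hi₀max
      | succ n =>
        simp only [hm'def, Nat.succ_ne_zero, if_neg]
        exact hm (by omega)
    set mshift : ℕ → ℕ := fun i => m (i₀ + i + 1) with hmshiftdef
    set cval := ‖F.Pint p (m (i₀ + 1)) w‖ with hcvaldef
    have hcval0 : 0 ≤ cval := hcvaldef ▸ norm_nonneg _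
    set crest := coeffOf F w (k' - 1) mshift with hcrestdef
    have hsplit : coeffOf F w k' m' = Finsupp.single p cval + crest := by
      rw [hcrestdef, hm'def, hmshiftdef, hcvaldef]
      rw [coeffOf, show k' = (k' - 1) + 1 by omega, Finset.sum_range_succ']
      exact add_comm _ _
    have hcnn : ∀ j, 0 ≤ crest j := fun j => hcrestdef ▸ coeffOf_nonneg F w (k' - 1) mshift j
    have hsnn : ∀ j, 0 ≤ (Finsupp.single p cval) j := by
      intro j
      rw [Finsupp.single_apply]
      split
      · exact hcval0
      · exact le_refl 0
    have hPc : ‖F.Pint (m i₀) (m (i₀ + 1)) w‖ = cval := by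
      rw [hcvaldef]
      congr 1
      refine F.Pint_congr w hfin ?_
      ext j
      simp only [Set.mem_inter_iff, Set.mem_Ico, FDD.supp, Set.mem_setOf_eq]
      constructor
      · rintro ⟨h1, h2, h3⟩
        exact ⟨h1, hple j h1, h3⟩
      · rintro ⟨h1, h2, h3⟩
        exact ⟨h1, by omega, h3⟩
    have hold : vecOf B F w k m =
        cval • B.v (m i₀) + vecOf B F w (k' - 1) mshift := by
      have h1 : vecOf B F w k m =
          ∑ i ∈ Finset.Ico i₀ k, ‖F.Pint (m i) (m (i + 1)) w‖ • B.v (m i) := by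
        rw [vecOf]
        refine (Finset.sum_subset
          (fun x hx => Finset.mem_range.mpr (Finset.mem_Ico.mp hx).2) ?_).symm
        intro i hi hni
        have hik := Finset.mem_range.mp hi
        have hii : i < i₀ := by
          simp only [Finset.mem_Ico, not_and, not_lt] at hni
          omega
        rw [hzero i hii, zero_smul]
      rw [h1, Finset.sum_Ico_eq_sum_range,
        show k - i₀ = (k' - 1) + 1 by omega, Finset.sum_range_succ', hmshiftdef]
      simp only [Nat.add_zero]
      rw [hPc]
      exact add_comm _ _
    have h_c_le : cval ≤ ‖vecOf B F w k' m'‖ := by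
      have h2 := hU (Finsupp.single p cval) (coeffOf F w k' m') ?_
      · rw [vec_single, vec_coeffOf, norm_smul, hN p, mul_one, Real.norm_eq_abs,
          abs_of_nonneg hcval0] at h2
        exact h2
      · intro j
        rw [hsplit, Finsupp.add_apply, abs_of_nonneg (hsnn j),
          abs_of_nonneg (by linarith [hcnn j, hsnn j])]
        linarith [hcnn j]
    have h_rest_le : ‖vecOf B F w (k' - 1) mshift‖ ≤ ‖vecOf B F w k' m'‖ := by
      have h2 := hU crest (coeffOf F w k' m') ?_
      · rw [hcrestdef, vec_coeffOf, vec_coeffOf] at h2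
        exact h2
      · intro j
        rw [hsplit, Finsupp.add_apply, abs_of_nonneg (hcnn j),
          abs_of_nonneg (by linarith [hcnn j, hsnn j])]
        linarith [hsnn j]
    have hole : r ≤ cval + ‖vecOf B F w (k' - 1) mshift‖ := by
      rw [hrv, hold]
      refine le_trans (norm_add_le _ _) ?_
      rw [norm_smul, hN (m i₀), mul_one, Real.norm_eq_abs, abs_of_nonneg hcval0]
    refine ⟨k', m', hk', hm', by simp [hm'def], by linarith⟩

end Aux3

/-- If `(v_n)` satisfies subsequential `C`-`V`-lower block estimates in itself, then any
FDD `(E_n)` of `Z` satisfies subsequential `2C`-`V`-lower block estimates in `Z^V`. -/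
theorem fdd_lower_block_estimates_in_ZV
    {V : Type*} [NormedAddCommGroup V] [NormedSpace ℝ V] [CompleteSpace V]
    (B : RSchauderBasis V) (hN : B.Normalized) (hU : B.Unconditional)
    (C : ℝ) (hC : 1 ≤ C) (hlow : B.LowerBlockEstSelf C)
    {Z : Type*} [NormedAddCommGroup Z] [NormedSpace ℝ Z] [CompleteSpace Z]
    (F : FDD Z) :
    ∀ z : ℕ → Z, (∀ n, z n ≠ 0) → (∀ n, (F.supp (z n)).Finite) →
      (∀ n, ∀ i ∈ F.supp (z n), ∀ j ∈ F.supp (z (n + 1)), i < j) →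
      (∀ n, ZVnorm B F (z n) = 1) →
      ∀ a : ℕ →₀ ℝ,
        ‖a.sum fun n r => r • B.v (F.minSupp (z n))‖ ≤
          (2 * C) * ZVnorm B F (a.sum fun n r => r • z n) := by
  classical
  intro z hz0 hfin hblk hZV a
  have hC0 : (0:ℝ) < C := lt_of_lt_of_le one_pos hC
  by_cases ha : a = 0
  · subst ha
    simp only [Finsupp.sum_zero_index, norm_zero]
    have hfin0 : (F.supp (0 : Z)).Finite := by
      have h : F.supp (0 : Z) = ∅ := by
        ext j; simp [FDD.supp]
      rw [h]; exact Set.finite_empty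
    have h0 := ZVnorm_nonneg B hN F 0 hfin0
    nlinarith
  set x := a.sum fun n r => r • z n with hxdef
  have hprojx : ∀ j, F.proj j x = a.sum fun n r => r • F.proj j (z n) := by
    intro j
    rw [hxdef, map_finsuppSum]
    exact Finsupp.sum_congr fun n _ => by rw [map_smul]
  have hxfin : (F.supp x).Finite := by
    have hsub : F.supp x ⊆ ↑(a.support.biUnion fun n => (hfin n).toFinset) := by
      intro j hj
      rw [Finset.mem_coe, Finset.mem_biUnion]
      by_contra h
      push_neg at h
      apply hj
      rw [hprojx j, Finsupp.sum]
      refine Finset.sum_eq_zero fun n hn => ?_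
      have h2 : F.proj j (z n) = 0 := by
        by_contra hne
        exact h n hn ((hfin n).mem_toFinset.mpr hne)
      rw [h2, smul_zero]
    exact Set.Finite.subset (a.support.biUnion fun n => (hfin n).toFinset).finite_toSet hsub
  have hminmem : ∀ n, F.proj (F.minSupp (z n)) (z n) ≠ 0 := fun n => F.minSupp_mem (z n) (hz0 n)
  have hminle : ∀ n j, F.proj j (z n) ≠ 0 → F.minSupp (z n) ≤ j :=
    fun n j h => F.minSupp_le (z n) h
  have hmaxle : ∀ n j, F.proj j (z n) ≠ 0 → j ≤ F.maxSupp (z n) :=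
    fun n j h => F.le_maxSupp (z n) (hfin n) h
  have hmaxmem : ∀ n, F.proj (F.maxSupp (z n)) (z n) ≠ 0 :=
    fun n => F.maxSupp_mem (z n) (hz0 n) (hfin n)
  have hminmax : ∀ n, F.minSupp (z n) ≤ F.maxSupp (z n) := fun n => hmaxle n _ (hminmem n)
  have hsucc : ∀ n, F.maxSupp (z n) < F.minSupp (z (n+1)) :=
    fun n => hblk n _ (hmaxmem n) _ (hminmem (n+1))
  have hchain : ∀ {n n' : ℕ}, n < n' → F.maxSupp (z n) < F.minSupp (z n') := by
    intro n n' h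
    induction n' with
    | zero => omega
    | succ t ih =>
      rcases Nat.lt_succ_iff_lt_or_eq.mp h with h' | h'
      · exact lt_of_lt_of_le (ih h') (le_trans (hminmax t) (le_of_lt (hsucc t)))
      · subst h'; exact hsucc n
  have hZVx : 0 ≤ ZVnorm B F x := ZVnorm_nonneg B hN F x hxfin
  suffices hkey : ∀ δ : ℝ, 0 < δ → δ ≤ 1/4 →
      ‖a.sum fun n r => r • B.v (F.minSupp (z n))‖ ≤ C * (2 + 8*δ) * ZVnorm B F x by
    refine le_of_forall_pos_le_add fun ε hε => ?_
    have hA0 : (0:ℝ) < 8 * C * (ZVnorm B F x + 1) := by nlinarith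
    have hd0 : (0:ℝ) < ε / (8 * C * (ZVnorm B F x + 1)) := div_pos hε hA0
    set δ := min (1/4 : ℝ) (ε / (8 * C * (ZVnorm B F x + 1))) with hδdef
    have hδ0 : 0 < δ := lt_min (by norm_num) hd0
    have hδ1 : δ ≤ 1/4 := min_le_left _ _
    have h1 := hkey δ hδ0 hδ1
    have h3 : δ ≤ ε / (8 * C * (ZVnorm B F x + 1)) := min_le_right _ _
    have h2 : δ * (8 * C * (ZVnorm B F x + 1)) ≤ ε := (le_div_iff₀ hA0).mp h3
    nlinarith [mul_nonneg (mul_nonneg (by norm_num : (0:ℝ) ≤ 8) hC0.le) hδ0.le]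
  intro δ hδ0 hδ1
  have hhalf : (0:ℝ) < 1/2 - δ := by linarith
  choose kf mf hk1 hmono hm0 hval using fun n =>
    restrict_blocking B F hN hU (z n) (hz0 n) (hfin n) (hZV n) δ hδ0 hδ1
  set c : ℕ → ℕ →₀ ℝ := fun n => coeffOf F (z n) (kf n) (mf n) with hcdef
  have hbval : ∀ n, 1/2 - δ < ‖B.vec (c n)‖ := fun n => by
    rw [hcdef, vec_coeffOf]; exact hval n
  have hbpos : ∀ n, 0 < ‖B.vec (c n)‖ := fun n => lt_trans hhalf (hbval n)
  have hbinv : ∀ n, 0 < (‖B.vec (c n)‖)⁻¹ := fun n => inv_pos.mpr (hbpos n)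
  set cc : ℕ → ℕ →₀ ℝ := fun n => (‖B.vec (c n)‖)⁻¹ • c n with hccdef
  have hccapp : ∀ n j, cc n j = (‖B.vec (c n)‖)⁻¹ * c n j := fun n j => by
    rw [hccdef]; simp [Finsupp.smul_apply]
  have hcnn : ∀ n j, 0 ≤ c n j := fun n j => by
    rw [hcdef]; exact coeffOf_nonneg F (z n) (kf n) (mf n) j
  have hcsupp : ∀ n j, c n j ≠ 0 → F.minSupp (z n) ≤ j ∧ j ≤ F.maxSupp (z n) := by
    intro n j hj
    have hex : ∃ i, i < kf n ∧ mf n i = j := by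
      by_contra h
      push_neg at h
      exact hj (by rw [hcdef]; exact coeffOf_eq_zero F (z n) (kf n) h)
    obtain ⟨i, hi, hij⟩ := hex
    have hval' : c n j = ‖F.Pint (mf n i) (mf n (i+1)) (z n)‖ := by
      rw [hcdef, ← hij]
      exact coeffOf_apply F (z n) (kf n) (hmono n) hi
    have hPne : F.Pint (mf n i) (mf n (i+1)) (z n) ≠ 0 := by
      intro h0; rw [hval', h0, norm_zero] at hj; exact hj rfl
    have hex2 : ¬ (∀ j', mf n i ≤ j' → j' < mf n (i+1) → F.proj j' (z n) = 0) :=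
      fun h => hPne (F.Pint_eq_zero _ _ _ h)
    push_neg at hex2
    obtain ⟨j', h1, h2, h3⟩ := hex2
    constructor
    · calc F.minSupp (z n) = mf n 0 := (hm0 n).symm
        _ ≤ mf n i := (hmono n).monotone (Nat.zero_le i)
        _ = j := hij
    · calc j = mf n i := hij.symm
        _ ≤ j' := h1
        _ ≤ F.maxSupp (z n) := hmaxle n j' h3
  have hcmin : ∀ n, c n (F.minSupp (z n)) ≠ 0 := by
    intro n
    rw [← hm0 n, hcdef, coeffOf_apply F (z n) (kf n) (hmono n) (hk1 n), norm_ne_zero_iff]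
    exact F.Pint_ne_zero _ _ _ (le_refl _) ((hmono n) Nat.zero_lt_one)
      (by rw [hm0 n]; exact hminmem n)
  have hcc0 : ∀ n, cc n ≠ 0 := by
    intro n h
    apply hcmin n
    have h2 : cc n (F.minSupp (z n)) = 0 := by rw [h]; rfl
    rw [hccapp] at h2
    rcases mul_eq_zero.mp h2 with h3 | h3
    · exact absurd h3 (ne_of_gt (hbinv n))
    · exact h3
  have hblockseq : IsCoeffBlockSeq cc := by
    refine ⟨hcc0, fun n i hi j hj => ?_⟩
    have hi' : c n i ≠ 0 := by
      have := Finsupp.mem_support_iff.mp hi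
      rw [hccapp] at this
      exact fun h => this (by rw [h, mul_zero])
    have hj' : c (n+1) j ≠ 0 := by
      have := Finsupp.mem_support_iff.mp hj
      rw [hccapp] at this
      exact fun h => this (by rw [h, mul_zero])
    have h1 := (hcsupp n i hi').2
    have h2 := (hcsupp (n+1) j hj').1
    have h3 := hsucc n
    omega
  have hccnorm : ∀ n, ‖B.vec (cc n)‖ = 1 := by
    intro n
    rw [hccdef]
    simp only
    rw [vec_smul, norm_smul, Real.norm_eq_abs, abs_of_pos (hbinv n)]
    exact inv_mul_cancel₀ (ne_of_gt (hbpos n))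
  have hmin' : ∀ n (hne : (cc n).support.Nonempty),
      (cc n).support.min' hne = F.minSupp (z n) := by
    intro n hne
    refine le_antisymm ?_ ?_
    · refine Finset.min'_le _ _ (Finsupp.mem_support_iff.mpr ?_)
      rw [hccapp]
      exact mul_ne_zero (ne_of_gt (hbinv n)) (hcmin n)
    · refine Finset.le_min' _ _ _ fun j hj => ?_
      have h1 := Finsupp.mem_support_iff.mp hj
      rw [hccapp] at h1
      have h2 : c n j ≠ 0 := fun h => h1 (by rw [h, mul_zero])
      exact (hcsupp n j h2).1
  have hdom := hlow cc hblockseq hccnorm a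
  have hstart : (a.sum fun n r => r • B.v (F.minSupp (z n))) =
      a.sum fun n r => r • B.v ((cc n).support.min'
        (Finsupp.support_nonempty_iff.mpr (hblockseq.1 n))) :=
    Finsupp.sum_congr fun n _ => by rw [hmin' n _]
  set e : ℕ →₀ ℝ := a.sum fun n r => r • cc n with hedef
  have hvece : (a.sum fun n r => r • B.vec (cc n)) = B.vec e := by
    rw [hedef, vec_finsupp_sum]
  -- the global cut set
  set N := a.support.max' (Finsupp.support_nonempty_iff.mpr ha) with hNdef
  set K : ℕ → Finset ℕ := fun n =>
    ((Finset.range (kf n + 1)).image (mf n)).filter (· ≤ F.maxSupp (z n)) with hKdef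
  set G : Finset ℕ :=
    ((Finset.range (N+1)).biUnion K) ∪ {F.maxSupp (z N) + 1} with hGdef
  have hKmem : ∀ n t, t ∈ K n ↔ ((∃ i, i ≤ kf n ∧ mf n i = t) ∧ t ≤ F.maxSupp (z n)) := by
    intro n t
    rw [hKdef]
    simp [Finset.mem_filter, Finset.mem_image, Finset.mem_range, Nat.lt_succ_iff]
  have hKlb : ∀ n t, t ∈ K n → F.minSupp (z n) ≤ t := by
    intro n t ht
    obtain ⟨⟨i, _, hit⟩, _⟩ := (hKmem n t).mp ht
    calc F.minSupp (z n) = mf n 0 := (hm0 n).symm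
      _ ≤ mf n i := (hmono n).monotone (Nat.zero_le i)
      _ = t := hit
  have hGmem : ∀ t, t ∈ G ↔ ((∃ n, n ≤ N ∧ t ∈ K n) ∨ t = F.maxSupp (z N) + 1) := by
    intro t
    rw [hGdef]
    simp [Finset.mem_union, Finset.mem_biUnion, Finset.mem_range, Nat.lt_succ_iff]
    exact or_comm
  have hMxle : ∀ n, n ≤ N → F.maxSupp (z n) ≤ F.maxSupp (z N) := by
    intro n hn
    rcases eq_or_lt_of_le hn with h | h
    · rw [h]
    · exact le_trans (le_of_lt (hchain h)) (hminmax N)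
  have hGub : ∀ t, t ∈ G → t ≤ F.maxSupp (z N) + 1 := by
    intro t ht
    rcases (hGmem t).mp ht with ⟨n, hn, hK⟩ | h
    · have := ((hKmem n t).mp hK).2
      have := hMxle n hn
      omega
    · omega
  have htopG : F.maxSupp (z N) + 1 ∈ G := (hGmem _).mpr (Or.inr rfl)
  have hmsG : ∀ n, n ≤ N → F.minSupp (z n) ∈ G := by
    intro n hn
    refine (hGmem _).mpr (Or.inl ⟨n, hn, ?_⟩)
    exact (hKmem n _).mpr ⟨⟨0, Nat.zero_le _, hm0 n⟩, hminmax n⟩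
  have hG2 : 1 < G.card := by
    refine Finset.one_lt_card.mpr ⟨F.minSupp (z N), hmsG N (le_refl N),
      F.maxSupp (z N) + 1, htopG, ?_⟩
    have := hminmax N
    omega
  -- enumeration of G
  have hfmem : ∀ t : Fin G.card, (G.orderEmbOfFin rfl) t ∈ G :=
    fun t => Finset.orderEmbOfFin_mem G rfl t
  have hfsurj : ∀ t ∈ G, ∃ i : Fin G.card, (G.orderEmbOfFin rfl) i = t := by
    intro t ht
    have h := Finset.range_orderEmbOfFin G rfl
    have : t ∈ Set.range (G.orderEmbOfFin rfl) := by rw [h]; exact ht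
    exact this
  obtain ⟨μ, hμmono, hμeq⟩ := extend_mono (G.card - 1)
    (fun i => if h : i < G.card then (G.orderEmbOfFin rfl) ⟨i, h⟩ else 0) (by
      intro i hi
      have h1 : i < G.card := by omega
      have h2 : i + 1 < G.card := by omega
      simp only [dif_pos h1, dif_pos h2]
      exact (G.orderEmbOfFin rfl).strictMono (Fin.mk_lt_mk.mpr (lt_add_one i)))
  have hμf : ∀ (i : ℕ) (h : i < G.card), μ i = (G.orderEmbOfFin rfl) ⟨i, h⟩ := by
    intro i h
    rw [hμeq i (by omega), dif_pos h]
  set g : ℕ →₀ ℝ := coeffOf F x (G.card - 1) μ with hgdef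
  have hgnn : ∀ j, 0 ≤ g j := fun j => by
    rw [hgdef]; exact coeffOf_nonneg F x (G.card - 1) μ j
  have hgle : ‖B.vec g‖ ≤ ZVnorm B F x := by
    rw [hgdef, vec_coeffOf]
    exact vecOf_le_ZVnorm B hN F x hxfin _ hμmono
  -- pointwise comparison
  have hptw : ∀ j, |e j| ≤ |((1/2 - δ)⁻¹ • g) j| := by
    intro j
    have hKc0 : (0:ℝ) ≤ (1/2 - δ)⁻¹ := le_of_lt (inv_pos.mpr hhalf)
    have hrhs : ((1/2 - δ)⁻¹ • g) j = (1/2 - δ)⁻¹ * g j := by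
      rw [Finsupp.smul_apply]; simp
    rw [hrhs, abs_of_nonneg (mul_nonneg hKc0 (hgnn j))]
    have heapp : e j = a.sum fun n r => r * cc n j := by
      rw [hedef, Finsupp.sum_apply]
      exact Finsupp.sum_congr fun n _ => by simp [Finsupp.smul_apply]
    by_cases hj : ∃ n, n ∈ a.support ∧ c n j ≠ 0
    · obtain ⟨n₀, hn₀a, hn₀c⟩ := hj
      have hn₀N : n₀ ≤ N := Finset.le_max' _ _ hn₀a
      obtain ⟨hjlb, hjub⟩ := hcsupp n₀ j hn₀c
      have hej : e j = a n₀ * cc n₀ j := by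
        rw [heapp, Finsupp.sum]
        refine Finset.sum_eq_single_of_mem n₀ hn₀a fun n hn hne => ?_
        have hc0 : c n j = 0 := by
          by_contra hc
          obtain ⟨hl, hu⟩ := hcsupp n j hc
          rcases lt_or_gt_of_ne hne with h | h
          · have := hchain h; omega
          · have := hchain h; omega
        rw [hccapp, hc0, mul_zero, mul_zero]
      have hex : ∃ i, i < kf n₀ ∧ mf n₀ i = j := by
        by_contra h; push_neg at h
        exact hn₀c (by rw [hcdef]; exact coeffOf_eq_zero F (z n₀) (kf n₀) h)
      obtain ⟨i, hik, hij⟩ := hex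
      have hcval : c n₀ j = ‖F.Pint (mf n₀ i) (mf n₀ (i+1)) (z n₀)‖ := by
        rw [hcdef, ← hij]
        exact coeffOf_apply F (z n₀) (kf n₀) (hmono n₀) hik
      have hjG : j ∈ G := (hGmem j).mpr (Or.inl ⟨n₀, hn₀N,
        (hKmem n₀ j).mpr ⟨⟨i, by omega, hij⟩, hjub⟩⟩)
      have htop_lt : j < F.maxSupp (z N) + 1 := by
        have := hMxle n₀ hn₀N; omega
      obtain ⟨t, hft⟩ := hfsurj j hjG
      have htlt : (t : ℕ) < G.card - 1 := by
        by_contra h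
        push_neg at h
        obtain ⟨s, hfs⟩ := hfsurj _ htopG
        have hst : s ≤ t := by
          have := s.isLt
          exact Fin.le_def.mpr (by omega)
        have := (G.orderEmbOfFin rfl).monotone hst
        rw [hfs, hft] at this
        omega
      have hμt : μ (t : ℕ) = j := by
        have hteq : (⟨(t : ℕ), t.isLt⟩ : Fin G.card) = t := Fin.ext rfl
        rw [hμf (t : ℕ) t.isLt, hteq, hft]
      set ν := μ ((t : ℕ) + 1) with hνdef
      have hνG : ν ∈ G := by
        rw [hνdef, hμf ((t : ℕ) + 1) (by omega)]
        exact hfmem _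
      have hjν : j < ν := by
        rw [← hμt, hνdef]
        exact hμmono (lt_add_one _)
      have hnext : ∀ s, s ∈ G → s ≤ j ∨ ν ≤ s := by
        intro s hs
        obtain ⟨u, hfu⟩ := hfsurj s hs
        rcases le_or_gt (u : ℕ) (t : ℕ) with h | h
        · left
          rw [← hfu, ← hft]
          exact (G.orderEmbOfFin rfl).monotone (Fin.le_def.mpr h)
        · right
          rw [← hfu, hνdef, hμf ((t : ℕ) + 1) (by omega)]
          refine (G.orderEmbOfFin rfl).monotone ?_
          rw [Fin.le_def]
          simpa using h
      have hgj : g j = ‖F.Pint j ν x‖ := by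
        rw [hgdef, ← hμt, hνdef]
        exact coeffOf_apply F x (G.card - 1) hμmono htlt
      have hvanish : ∀ n, n ∈ a.support → n ≠ n₀ → F.Pint j ν (z n) = 0 := by
        intro n hn hne
        refine F.Pint_eq_zero _ _ _ fun j' h1 h2 => ?_
        by_contra hj'
        have hl := hminle n j' hj'
        have hu := hmaxle n j' hj'
        rcases lt_or_gt_of_ne hne with h | h
        · have := hchain h; omega
        · have hnN : n ≤ N := Finset.le_max' _ _ hn
          have hmsmem : F.minSupp (z n) ∈ G := hmsG n hnN
          have hjlt : ¬ (F.minSupp (z n) ≤ j) := by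
            have := hchain h
            omega
          rcases hnext _ hmsmem with h' | h'
          · exact hjlt h'
          · omega
      have hPx : F.Pint j ν x = a n₀ • F.Pint j ν (z n₀) := by
        rw [hxdef, F.Pint_finsupp_sum, Finsupp.sum]
        refine Finset.sum_eq_single_of_mem n₀ hn₀a fun n hn hne => ?_
        rw [hvanish n hn hne, smul_zero]
      have hPz : F.Pint j ν (z n₀) = F.Pint (mf n₀ i) (mf n₀ (i+1)) (z n₀) := by
        rw [← hij]
        refine F.Pint_congr (z n₀) (hfin n₀) ?_
        ext j'
        simp only [Set.mem_inter_iff, Set.mem_Ico, FDD.supp, Set.mem_setOf_eq]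
        constructor
        · rintro ⟨hp1, hp2, hp3⟩
          refine ⟨hp1, hp2, ?_⟩
          by_contra hge
          push_neg at hge
          have hu := hmaxle n₀ j' hp1
          have hqG : mf n₀ (i+1) ∈ G := (hGmem _).mpr (Or.inl ⟨n₀, hn₀N,
            (hKmem n₀ _).mpr ⟨⟨i+1, by omega, rfl⟩, by omega⟩⟩)
          have hqj : ¬ (mf n₀ (i+1) ≤ j) := by
            rw [← hij]
            push_neg
            exact hmono n₀ (lt_add_one i)
          rcases hnext _ hqG with h' | h'
          · exact hqj h'
          · omega
        · rintro ⟨hp1, hp2, hp3⟩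
          refine ⟨hp1, hp2, ?_⟩
          by_contra hge
          push_neg at hge
          have hu := hmaxle n₀ j' hp1
          rcases (hGmem ν).mp hνG with ⟨n', hn'N, hn'K⟩ | htopν
          · obtain ⟨⟨i', hi'k, hi'⟩, hub⟩ := (hKmem n' ν).mp hn'K
            rcases lt_trichotomy n' n₀ with h' | h' | h'
            · have h1 := hchain h'
              have h2 := hKlb n' ν hn'K
              omega
            · subst h'
              have hii' : i < i' := by
                by_contra hle
                push_neg at hle
                have := (hmono n').monotone hle
                omega
              have hq : mf n' (i+1) ≤ mf n' i' := (hmono n').monotone hii'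
              omega
            · have h1 := hchain h'
              have h2 := hKlb n' ν hn'K
              omega
          · have := hMxle n₀ hn₀N
            omega
      have hgval : g j = |a n₀| * ‖F.Pint (mf n₀ i) (mf n₀ (i+1)) (z n₀)‖ := by
        rw [hgj, hPx, hPz, norm_smul, Real.norm_eq_abs]
      have hinv : (‖B.vec (c n₀)‖)⁻¹ ≤ (1/2 - δ)⁻¹ :=
        inv_anti₀ hhalf (le_of_lt (hbval n₀))
      rw [hej, hccapp, hcval, hgval]
      rw [abs_mul]
      rw [abs_of_nonneg (mul_nonneg (le_of_lt (hbinv n₀)) (norm_nonneg _))]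
      calc |a n₀| * ((‖B.vec (c n₀)‖)⁻¹ * ‖F.Pint (mf n₀ i) (mf n₀ (i+1)) (z n₀)‖)
          ≤ |a n₀| * ((1/2 - δ)⁻¹ * ‖F.Pint (mf n₀ i) (mf n₀ (i+1)) (z n₀)‖) := by
            refine mul_le_mul_of_nonneg_left ?_ (abs_nonneg _)
            exact mul_le_mul_of_nonneg_right hinv (norm_nonneg _)
        _ = (1/2 - δ)⁻¹ * (|a n₀| * ‖F.Pint (mf n₀ i) (mf n₀ (i+1)) (z n₀)‖) := by ring
    · push_neg at hj
      have he0 : e j = 0 := by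
        rw [heapp, Finsupp.sum]
        refine Finset.sum_eq_zero fun n hn => ?_
        rw [hccapp, hj n hn, mul_zero, mul_zero]
      rw [he0, abs_zero]
      exact mul_nonneg hKc0 (hgnn j)
  -- final chain
  have hKcle : (1/2 - δ)⁻¹ ≤ 2 + 8*δ := by
    rw [inv_le_iff_one_le_mul₀ hhalf]
    nlinarith
  rw [hstart]
  calc ‖a.sum fun n r => r • B.v ((cc n).support.min'
        (Finsupp.support_nonempty_iff.mpr (hblockseq.1 n)))‖
      ≤ C * ‖a.sum fun n r => r • B.vec (cc n)‖ := hdom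
    _ = C * ‖B.vec e‖ := by rw [hvece]
    _ ≤ C * ‖B.vec ((1/2 - δ)⁻¹ • g)‖ :=
        mul_le_mul_of_nonneg_left (hU e _ hptw) hC0.le
    _ = C * ((1/2 - δ)⁻¹ * ‖B.vec g‖) := by
        rw [vec_smul, norm_smul, Real.norm_eq_abs, abs_of_pos (inv_pos.mpr hhalf)]
    _ ≤ C * ((2 + 8*δ) * ZVnorm B F x) := by
        refine mul_le_mul_of_nonneg_left ?_ hC0.le
        refine mul_le_mul hKcle hgle (norm_nonneg _) (by linarith)
    _ = C * (2 + 8*δ) * ZVnorm B F x := by ring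

end
end

section
/- (First part of Proposition 3.1:) Let α be a countable ordinal (with a fixed choice of cofinal sequences defining the Schreier family S_α). If (m_n) and (k_n) are sequences of natural numbers with m_n ≤ k_n < m_{n+1} for all n, then for every finitely supported real sequence (a_n), ‖Σ a_n e_{k_n}‖_α ≤ 2 ‖Σ a_n e_{m_n}‖_α; that is, (e_{m_n}) 2-dominates (e_{k_n}) in the Schreier space X_α. -/
open Filter Topology Metric

noncomputable section


/-! ### Schreier families on ℕ+ = {1,2,...} -/

/-- The successor step of the Schreier hierarchy. -/
def schreierSucc (S : Set (Finset ℕ+)) : Set (Finset ℕ+) :=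
  insert ∅ {F | ∃ (m : ℕ) (hm : 0 < m) (Es : Fin m → Finset ℕ+),
    (∀ i, Es i ∈ S) ∧ (∀ i, (Es i).Nonempty) ∧
    (∀ i j : Fin m, i < j → ∀ p ∈ Es i, ∀ q ∈ Es j, p < q) ∧
    (∀ p ∈ Es ⟨0, hm⟩, m ≤ (p : ℕ)) ∧
    F = Finset.univ.biUnion Es}

/-- The Schreier family `S_o`, relative to a choice `c` of cofinal sequences at limit
ordinals. -/
def schreier (c : Ordinal → ℕ+ → Ordinal) (o : Ordinal) : Set (Finset ℕ+) :=
  Ordinal.limitRecOn o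
    (insert ∅ {E | ∃ n : ℕ+, E = {n}})
    (fun _ S => schreierSucc S)
    (fun l _ ih =>
      insert ∅ {F | ∃ (n : ℕ+) (h : c l n < l), F ∈ ih (c l n) h ∧ ∀ k ∈ F, n ≤ k})

/-- `c` is a legitimate choice of cofinal sequences: at every countable limit ordinal `o`,
`c o` is a strictly increasing sequence of ordinals below `o` with supremum `o`. -/
def IsCofinalChoice (c : Ordinal → ℕ+ → Ordinal) : Prop :=
  ∀ o : Ordinal, Order.IsSuccLimit o → o < Ordinal.omega 1 →
    StrictMono (c o) ∧ (∀ n : ℕ+, c o n < o) ∧ ∀ b < o, ∃ n : ℕ+, b ≤ c o n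

/-- The Schreier norm `‖x‖_o = sup { Σ_{n ∈ E} |x n| : E ∈ S_o }` of a finitely supported
function. -/
def schreierNorm (c : Ordinal → ℕ+ → Ordinal) (o : Ordinal) (x : ℕ+ →₀ ℝ) : ℝ :=
  sSup {r : ℝ | ∃ E ∈ schreier c o, r = ∑ n ∈ E, |x n|}

/-- The finitely supported function `Σ_n a_n e_{k n}`. -/
def schreierComb (k : ℕ → ℕ+) (a : ℕ →₀ ℝ) : ℕ+ →₀ ℝ :=
  a.sum fun n r => Finsupp.single (k n) r

section SchreierAux

variable (c : Ordinal → ℕ+ → Ordinal)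

lemma schreier_zero : schreier c 0 = insert ∅ {E | ∃ n : ℕ+, E = {n}} :=
  Ordinal.limitRecOn_zero _ _ _

lemma schreier_succ (o : Ordinal) :
    schreier c (Order.succ o) = schreierSucc (schreier c o) :=
  Ordinal.limitRecOn_succ _ _ _ _

lemma schreier_limit (l : Ordinal) (hl : Order.IsSuccLimit l) :
    schreier c l = insert ∅ {F | ∃ (n : ℕ+) (_ : c l n < l),
      F ∈ schreier c (c l n) ∧ ∀ k ∈ F, n ≤ k} :=
  Ordinal.limitRecOn_limit _ _ _ _ hl

lemma schreier_empty_mem (o : Ordinal) : ∅ ∈ schreier c o := by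
  induction o using Ordinal.limitRecOn with
  | zero => rw [schreier_zero]; exact Set.mem_insert _ _
  | add_one o ih => rw [Ordinal.add_one_eq_succ, schreier_succ]; exact Set.mem_insert _ _
  | limit l hl ih => rw [schreier_limit c l hl]; exact Set.mem_insert _ _

lemma schreier_dominates : ∀ o : Ordinal, ∀ E ∈ schreier c o, ∀ (F : Finset ℕ+) (g : ℕ+ → ℕ+),
    (∀ q ∈ F, g q ∈ E) → (∀ q ∈ F, g q ≤ q) →
    (∀ q ∈ F, ∀ q' ∈ F, q < q' → g q < g q') → F ∈ schreier c o := by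
  intro o
  induction o using Ordinal.limitRecOn with
  | zero =>
    intro E hE F g hg1 _ hg3
    rcases F.eq_empty_or_nonempty with rfl | ⟨q0, hq0⟩
    · exact schreier_empty_mem c 0
    rw [schreier_zero] at hE ⊢
    simp only [Set.mem_insert_iff, Set.mem_setOf_eq] at hE ⊢
    rcases hE with rfl | ⟨n, rfl⟩
    · exact absurd (hg1 q0 hq0) (Finset.notMem_empty _)
    · right
      refine ⟨q0, Finset.eq_singleton_iff_unique_mem.mpr ⟨hq0, ?_⟩⟩
      intro q hq
      by_contra hne
      have e1 := hg1 q hq; have e2 := hg1 q0 hq0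
      simp only [Finset.mem_singleton] at e1 e2
      rcases lt_or_gt_of_ne hne with h | h
      · have := hg3 q hq q0 hq0 h; rw [e1, e2] at this; exact lt_irrefl _ this
      · have := hg3 q0 hq0 q hq h; rw [e1, e2] at this; exact lt_irrefl _ this
  | add_one o ih =>
    intro E hE F g hg1 hg2 hg3
    rcases F.eq_empty_or_nonempty with rfl | ⟨q0, hq0⟩
    · exact schreier_empty_mem c _
    rw [Ordinal.add_one_eq_succ, schreier_succ] at hE ⊢
    simp only [schreierSucc, Set.mem_insert_iff, Set.mem_setOf_eq] at hE ⊢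
    rcases hE with rfl | ⟨mm, hmm, Es, hS, hne, hsucc, hmin, rfl⟩
    · exact absurd (hg1 q0 hq0) (Finset.notMem_empty _)
    right
    -- strict monotonicity both ways
    have hmono : ∀ q ∈ F, ∀ q' ∈ F, g q < g q' → q < q' := by
      intro q hq q' hq' h
      by_contra hpq
      push_neg at hpq
      rcases eq_or_lt_of_le hpq with rfl | hlt
      · exact lt_irrefl _ h
      · exact absurd (hg3 q' hq' q hq hlt) (asymm h)
    set Fi : Fin mm → Finset ℕ+ := fun i => F.filter (fun q => g q ∈ Es i) with hFi
    set T : Finset (Fin mm) := Finset.univ.filter (fun i => (Fi i).Nonempty) with hT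
    obtain ⟨i0, -, hi0⟩ := Finset.mem_biUnion.mp (hg1 q0 hq0)
    have hi0T : i0 ∈ T :=
      Finset.mem_filter.mpr ⟨Finset.mem_univ _, ⟨q0, Finset.mem_filter.mpr ⟨hq0, hi0⟩⟩⟩
    have hm' : 0 < T.card := Finset.card_pos.mpr ⟨i0, hi0T⟩
    set σ := T.orderIsoOfFin rfl with hσ
    refine ⟨T.card, hm', fun j => Fi ↑(σ j), ?_, ?_, ?_, ?_, ?_⟩
    · intro j
      show Fi ↑(σ j) ∈ schreier c o
      refine ih (Es ↑(σ j)) (hS _) (Fi ↑(σ j)) g ?_ ?_ ?_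
      · intro q hq; exact (Finset.mem_filter.mp hq).2
      · intro q hq; exact hg2 q (Finset.mem_filter.mp hq).1
      · intro q hq q' hq' h
        exact hg3 q (Finset.mem_filter.mp hq).1 q' (Finset.mem_filter.mp hq').1 h
    · intro j
      show (Fi ↑(σ j)).Nonempty
      exact (Finset.mem_filter.mp (σ j).2).2
    · intro j j' hjj' p hp q hq
      simp only at hp hq
      have h1 : g p ∈ Es ↑(σ j) := (Finset.mem_filter.mp hp).2
      have h2 : g q ∈ Es ↑(σ j') := (Finset.mem_filter.mp hq).2
      have hij : (↑(σ j) : Fin mm) < ↑(σ j') := Subtype.coe_lt_coe.mpr (σ.strictMono hjj')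
      exact hmono p (Finset.mem_filter.mp hp).1 q (Finset.mem_filter.mp hq).1
        (hsucc _ _ hij _ h1 _ h2)
    · intro p hp
      simp only at hp
      have hpF : p ∈ F := (Finset.mem_filter.mp hp).1
      have hpi : g p ∈ Es ↑(σ ⟨0, hm'⟩) := (Finset.mem_filter.mp hp).2
      have hcard : T.card ≤ mm := by simpa using T.card_le_univ
      have hmmgp : mm ≤ ((g p : ℕ+) : ℕ) := by
        rcases eq_or_lt_of_le (show (⟨0, hmm⟩ : Fin mm) ≤ ↑(σ ⟨0, hm'⟩) from
            Fin.mk_le_of_le_val (Nat.zero_le _)) with heq | hlt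
        · rw [← heq] at hpi; exact hmin _ hpi
        · obtain ⟨w, hw⟩ := hne ⟨0, hmm⟩
          have hwlt := hsucc _ _ hlt w hw (g p) hpi
          exact le_trans (hmin w hw) (le_of_lt (by exact_mod_cast hwlt))
      have hle : ((g p : ℕ+) : ℕ) ≤ (p : ℕ) := by exact_mod_cast hg2 p hpF
      omega
    · ext q
      simp only [Finset.mem_biUnion, Finset.mem_univ, true_and]
      constructor
      · intro hq
        obtain ⟨i, -, hi⟩ := Finset.mem_biUnion.mp (hg1 q hq)
        have hiT : i ∈ T :=
          Finset.mem_filter.mpr ⟨Finset.mem_univ _, ⟨q, Finset.mem_filter.mpr ⟨hq, hi⟩⟩⟩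
        refine ⟨σ.symm ⟨i, hiT⟩, ?_⟩
        have : σ (σ.symm ⟨i, hiT⟩) = ⟨i, hiT⟩ := σ.apply_symm_apply _
        show q ∈ Fi ↑(σ (σ.symm ⟨i, hiT⟩))
        rw [this]
        exact Finset.mem_filter.mpr ⟨hq, hi⟩
      · rintro ⟨j, hj⟩
        exact (Finset.mem_filter.mp hj).1
  | limit l hl ih =>
    intro E hE F g hg1 hg2 hg3
    rcases F.eq_empty_or_nonempty with rfl | ⟨q0, hq0⟩
    · exact schreier_empty_mem c l
    rw [schreier_limit c l hl] at hE ⊢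
    simp only [Set.mem_insert_iff, Set.mem_setOf_eq] at hE ⊢
    rcases hE with rfl | ⟨n, h, hE', hn⟩
    · exact absurd (hg1 q0 hq0) (Finset.notMem_empty _)
    right
    exact ⟨n, h, ih _ h E hE' F g hg1 hg2 hg3,
      fun q hq => le_trans (hn _ (hg1 q hq)) (hg2 q hq)⟩



lemma schreier_singleton (hc : IsCofinalChoice c) :
    ∀ o : Ordinal, o < Ordinal.omega 1 → ∀ p : ℕ+, ({p} : Finset ℕ+) ∈ schreier c o := by
  intro o
  induction o using Ordinal.limitRecOn with
  | zero =>
    intro _ p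
    rw [schreier_zero]
    exact Set.mem_insert_iff.mpr (Or.inr ⟨p, rfl⟩)
  | add_one o ih =>
    intro ho p
    rw [Ordinal.add_one_eq_succ, schreier_succ]
    refine Set.mem_insert_iff.mpr (Or.inr ⟨1, one_pos, fun _ => {p}, ?_, ?_, ?_, ?_, ?_⟩)
    · intro _; exact ih (lt_trans (Order.lt_succ o) ho) p
    · intro _; exact ⟨p, Finset.mem_singleton_self p⟩
    · intro i j hij; exact absurd (Subsingleton.elim i j) (ne_of_lt hij)
    · intro q hq; simp only [Finset.mem_singleton] at hq; subst hq; exact q.one_le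
    · simp
  | limit l hl ih =>
    intro ho p
    rw [schreier_limit c l hl]
    obtain ⟨-, hlt, -⟩ := hc l hl ho
    refine Set.mem_insert_iff.mpr (Or.inr ⟨1, hlt 1,
      ih (c l 1) (hlt 1) (lt_trans (hlt 1) ho) p, ?_⟩)
    intro q hq
    exact q.one_le

lemma schreier_sum_le (o : Ordinal) (x : ℕ+ →₀ ℝ) {E : Finset ℕ+} (hE : E ∈ schreier c o) :
    ∑ n ∈ E, |x n| ≤ schreierNorm c o x := by
  apply le_csSup
  · refine ⟨∑ n ∈ x.support, |x n|, ?_⟩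
    rintro r ⟨D, hD, rfl⟩
    have h1 : ∑ n ∈ D, |x n| = ∑ n ∈ D ∩ x.support, |x n| := by
      refine (Finset.sum_subset Finset.inter_subset_left ?_).symm
      intro n hn hn'
      have : n ∉ x.support := fun hns => hn' (Finset.mem_inter.mpr ⟨hn, hns⟩)
      rw [Finsupp.notMem_support_iff.mp this, abs_zero]
    rw [h1]
    exact Finset.sum_le_sum_of_subset_of_nonneg Finset.inter_subset_right
      (fun _ _ _ => abs_nonneg _)
  · exact ⟨E, hE, rfl⟩

lemma schreierNorm_nonneg (o : Ordinal) (x : ℕ+ →₀ ℝ) : 0 ≤ schreierNorm c o x := by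
  have := schreier_sum_le c o x (schreier_empty_mem c o)
  simpa using this

lemma schreierComb_apply {k : ℕ → ℕ+} (hk : Function.Injective k) (a : ℕ →₀ ℝ) (n : ℕ) :
    schreierComb k a (k n) = a n := by
  classical
  rw [schreierComb, Finsupp.sum_apply, Finsupp.sum]
  rw [Finset.sum_congr rfl (fun j _ => ?_), Finset.sum_ite_eq' a.support n (fun j => a j)]
  · split
    · rfl
    · next h => exact (Finsupp.notMem_support_iff.mp h).symm
  · rw [Finsupp.single_apply]
    simp [hk.eq_iff]

lemma schreierComb_apply_eq_zero {k : ℕ → ℕ+} (a : ℕ →₀ ℝ) {p : ℕ+}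
    (h : ∀ n ∈ a.support, k n ≠ p) : schreierComb k a p = 0 := by
  rw [schreierComb, Finsupp.sum_apply, Finsupp.sum]
  apply Finset.sum_eq_zero
  intro j hj
  rw [Finsupp.single_apply, if_neg (h j hj)]

end SchreierAux

/-- First part of Proposition 3.1: if `m_n ≤ k_n < m_{n+1}` then `(e_{m_n})`
`2`-dominates `(e_{k_n})` in the Schreier space `X_α`. -/
theorem schreier_two_domination
    (c : Ordinal → ℕ+ → Ordinal) (hc : IsCofinalChoice c)
    (α : Ordinal) (hα : α < Ordinal.omega 1)
    (m k : ℕ → ℕ+) (h1 : ∀ n, m n ≤ k n) (h2 : ∀ n, k n < m (n + 1)) :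
    ∀ a : ℕ →₀ ℝ,
      schreierNorm c α (schreierComb k a) ≤ 2 * schreierNorm c α (schreierComb m a) := by
  intro a
  have hkm : StrictMono k := strictMono_nat_of_lt_succ fun n => lt_of_lt_of_le (h2 n) (h1 (n + 1))
  have hmm : StrictMono m := strictMono_nat_of_lt_succ fun n => lt_of_le_of_lt (h1 n) (h2 n)
  have hnn : 0 ≤ schreierNorm c α (schreierComb m a) := schreierNorm_nonneg c α _
  rw [schreierNorm]
  apply Real.sSup_le _ (by linarith)
  rintro r ⟨E, hE, rfl⟩
  set N := a.support.filter (fun n => k n ∈ E) with hN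
  -- the characterization k j < m n ↔ j < n
  have hchar : ∀ n j : ℕ, k j < m n ↔ j < n := by
    intro n j
    constructor
    · intro h
      by_contra hle
      push_neg at hle
      exact absurd h (not_lt.mpr (le_trans (hmm.monotone hle) (h1 j)))
    · intro h
      exact lt_of_lt_of_le (h2 j) (hmm.monotone (by omega))
  have hsum : ∑ p ∈ E, |schreierComb k a p| = ∑ n ∈ N, |a n| := by
    have hsub : N.image k ⊆ E := by
      intro p hp
      obtain ⟨n, hn, rfl⟩ := Finset.mem_image.mp hp
      exact (Finset.mem_filter.mp hn).2
    rw [← Finset.sum_subset hsub ?_]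
    · rw [Finset.sum_image (fun n _ n' _ h => hkm.injective h)]
      exact Finset.sum_congr rfl fun n hn => by rw [schreierComb_apply hkm.injective]
    · intro p hp hpn
      have hz : schreierComb k a p = 0 := by
        apply schreierComb_apply_eq_zero
        intro n hna hknp
        exact hpn (Finset.mem_image.mpr ⟨n, Finset.mem_filter.mpr ⟨hna, hknp ▸ hp⟩, hknp⟩)
      rw [hz, abs_zero]
  rw [hsum]
  rcases N.eq_empty_or_nonempty with hNe | hNne
  · rw [hNe]
    simpa using by linarith
  set n₀ := N.min' hNne with hn₀
  rw [← Finset.add_sum_erase _ _ (N.min'_mem hNne)]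
  have b1 : |a n₀| ≤ schreierNorm c α (schreierComb m a) := by
    have hsing : ({m n₀} : Finset ℕ+) ∈ schreier c α := schreier_singleton c hc α hα (m n₀)
    have := schreier_sum_le c α (schreierComb m a) hsing
    simpa [schreierComb_apply hmm.injective] using this
  have b2 : ∑ n ∈ N.erase n₀, |a n| ≤ schreierNorm c α (schreierComb m a) := by
    set F := (N.erase n₀).image m with hF
    have hPmax : ∀ n ∈ N.erase n₀, ∃ pn, (N.filter fun j => k j < m n).max = some pn ∧
        pn ∈ N ∧ pn < n ∧ ∀ j ∈ N, j < n → j ≤ pn := by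
      intro n hn
      have hnN : n ∈ N := (Finset.mem_erase.mp hn).2
      have hn0n : n₀ < n := lt_of_le_of_ne (N.min'_le n hnN) (Ne.symm (Finset.mem_erase.mp hn).1)
      have hnefil : (N.filter fun j => k j < m n).Nonempty :=
        ⟨n₀, Finset.mem_filter.mpr ⟨N.min'_mem hNne, (hchar n n₀).mpr hn0n⟩⟩
      obtain ⟨pn, hpn⟩ := Finset.max_of_nonempty hnefil
      have hpmem := Finset.mem_of_max hpn
      refine ⟨pn, hpn, (Finset.mem_filter.mp hpmem).1,
        (hchar n pn).mp (Finset.mem_filter.mp hpmem).2, ?_⟩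
      intro j hj hjn
      exact Finset.le_max_of_eq (Finset.mem_filter.mpr ⟨hj, (hchar n j).mpr hjn⟩) hpn
    have hFmem : F ∈ schreier c α := by
      apply schreier_dominates c α E hE F
        (fun q => k (((N.filter fun j => k j < q).max).getD 0))
      · intro q hq
        obtain ⟨n, hn, rfl⟩ := Finset.mem_image.mp hq
        obtain ⟨pn, hpn, hpnN, -, -⟩ := hPmax n hn
        simp only [hpn, Option.getD_some]
        exact (Finset.mem_filter.mp hpnN).2
      · intro q hq
        obtain ⟨n, hn, rfl⟩ := Finset.mem_image.mp hq
        obtain ⟨pn, hpn, -, hplt, -⟩ := hPmax n hn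
        simp only [hpn, Option.getD_some]
        exact le_of_lt ((hchar n pn).mpr hplt)
      · intro q hq q' hq' hlt
        obtain ⟨n, hn, rfl⟩ := Finset.mem_image.mp hq
        obtain ⟨n', hn', rfl⟩ := Finset.mem_image.mp hq'
        obtain ⟨pn, hpn, -, hplt, -⟩ := hPmax n hn
        obtain ⟨pn', hpn', -, -, hmax'⟩ := hPmax n' hn'
        simp only [hpn, hpn', Option.getD_some]
        have hnn' : n < n' := hmm.lt_iff_lt.mp hlt
        have hnN : n ∈ N := (Finset.mem_erase.mp hn).2
        exact hkm (lt_of_lt_of_le hplt (hmax' n hnN hnn'))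
    have hFsum : ∑ p ∈ F, |schreierComb m a p| = ∑ n ∈ N.erase n₀, |a n| := by
      rw [hF, Finset.sum_image (fun n _ n' _ h => hmm.injective h)]
      exact Finset.sum_congr rfl fun n _ => by rw [schreierComb_apply hmm.injective]
    rw [← hFsum]
    exact schreier_sum_le c α (schreierComb m a) hFmem
  linarith

end
end

section
/- (Successor step of the Schreier construction preserves the defining properties:) Let S be a family of finite subsets of ℕ which is hereditary, spreading, contains ∅ and all singletons, and contains no strictly ascending chain E_1 ⊊ E_2 ⊊ ⋯ (equivalently, is compact in {0,1}^ℕ). Then the family S' = {E_1 ∪ ⋯ ∪ E_m : m ∈ ℕ, E_1,…,E_m ∈ S nonempty, m ≤ min E_1, and max E_i < min E_{i+1} for 1 ≤ i < m} ∪ {∅} is hereditary, spreading, and contains no strictly ascending chain. -/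
open Filter Topology Metric

noncomputable section


/-- A spreading family: images under strictly increasing maps moving points to the right
stay in the family. -/
def IsSpreadingP (S : Set (Finset ℕ+)) : Prop :=
  ∀ E ∈ S, ∀ f : ℕ+ → ℕ+, StrictMonoOn f (E : Set ℕ+) → (∀ p ∈ E, p ≤ f p) →
    E.image f ∈ S

/-! ### Auxiliary notions -/

/-- Unions of at most `k` members of `S`. -/
def kUnionS (S : Set (Finset ℕ+)) : ℕ → Set (Finset ℕ+)
  | 0 => {∅}
  | (k+1) => {F | ∃ B ∈ S, ∃ C ∈ kUnionS S k, F = B ∪ C}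

/-- No infinite set has all of its finite subsets in `S`. -/
def NoInfP (S : Set (Finset ℕ+)) : Prop :=
  ∀ U : Set ℕ+, U.Infinite → ∃ D : Finset ℕ+, ↑D ⊆ U ∧ D ∉ S

lemma kUnionS_hered (S : Set (Finset ℕ+)) (hher : ∀ E ∈ S, ∀ F ⊆ E, F ∈ S) :
    ∀ k, ∀ E ∈ kUnionS S k, ∀ F ⊆ E, F ∈ kUnionS S k := by
  intro k
  induction k with
  | zero =>
    intro E hE F hF
    simp only [kUnionS, Set.mem_singleton_iff] at hE ⊢
    subst hE
    exact Finset.subset_empty.mp hF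
  | succ k ih =>
    rintro E ⟨B, hB, C, hC, rfl⟩ F hF
    refine ⟨F ∩ B, hher _ hB _ Finset.inter_subset_right, F \ B, ih _ hC _ ?_, ?_⟩
    · intro x hx
      rcases Finset.mem_sdiff.mp hx with ⟨hxF, hxB⟩
      rcases Finset.mem_union.mp (hF hxF) with h | h
      · exact absurd h hxB
      · exact h
    · ext x
      simp only [Finset.mem_union, Finset.mem_inter, Finset.mem_sdiff]
      tauto

lemma kUnionS_mono (S : Set (Finset ℕ+)) (hempty : (∅ : Finset ℕ+) ∈ S)
    {m k : ℕ} (h : m ≤ k) : kUnionS S m ⊆ kUnionS S k := by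
  induction k with
  | zero => simp [Nat.le_zero.mp h]
  | succ k ih =>
    rcases Nat.lt_or_ge m (k+1) with h' | h'
    · intro F hF
      exact ⟨∅, hempty, F, ih (Nat.lt_succ_iff.mp h') hF, by simp⟩
    · have : m = k + 1 := le_antisymm h h'
      subst this; exact le_refl _

lemma biUnion_mem_kUnionS (S : Set (Finset ℕ+)) {ι : Type*} [DecidableEq ι]
    (s : Finset ι) (Es : ι → Finset ℕ+) (h : ∀ i ∈ s, Es i ∈ S) :
    s.biUnion Es ∈ kUnionS S s.card := by
  induction s using Finset.induction_on with
  | empty => simp [kUnionS]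
  | @insert a s ha ih =>
    rw [Finset.biUnion_insert, Finset.card_insert_of_notMem ha]
    exact ⟨Es a, h a (Finset.mem_insert_self a s), s.biUnion Es,
      ih (fun i hi => h i (Finset.mem_insert_of_mem hi)), rfl⟩

lemma noInfP_of_noChain (S : Set (Finset ℕ+))
    (hchain : ¬∃ E : ℕ → Finset ℕ+, (∀ i, E i ∈ S) ∧ ∀ i, E i ⊂ E (i + 1)) :
    NoInfP S := by
  intro U hU
  by_contra hcon
  push_neg at hcon
  apply hchain
  set f := hU.natEmbedding with hf
  refine ⟨fun n => (Finset.range (n+1)).image (fun i => (f i : ℕ+)), fun n => ?_, fun n => ?_⟩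
  · apply hcon
    intro x hx
    simp only [Finset.coe_image, Set.mem_image] at hx
    obtain ⟨i, _, rfl⟩ := hx
    exact (f i).2
  · constructor
    · apply Finset.image_subset_image
      exact Finset.range_subset_range.mpr (by omega)
    · intro hsub
      have : (f (n+1) : ℕ+) ∈ (Finset.range (n+2)).image (fun i => (f i : ℕ+)) := by
        simp only [Finset.mem_image, Finset.mem_range]
        exact ⟨n+1, by omega, rfl⟩
      have h2 := hsub this
      simp only [Finset.mem_image, Finset.mem_range] at h2
      obtain ⟨i, hi, hfi⟩ := h2
      have : f i = f (n+1) := Subtype.ext hfi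
      have := f.injective this
      omega

lemma noInfP_kUnionS (S : Set (Finset ℕ+)) (hher : ∀ E ∈ S, ∀ F ⊆ E, F ∈ S)
    (hS : NoInfP S) : ∀ k, NoInfP (kUnionS S k) := by
  intro k
  induction k with
  | zero =>
    intro U hU
    obtain ⟨u, hu⟩ := hU.nonempty
    refine ⟨{u}, by simpa using hu, ?_⟩
    simp only [kUnionS, Set.mem_singleton_iff]
    simp
  | succ k ih =>
    intro U hU
    by_contra hcon
    push_neg at hcon
    set f := hU.natEmbedding with hf
    set g : ℕ → ℕ+ := fun n => (f n : ℕ+) with hg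
    have hginj : Function.Injective g := fun a b h => f.injective (Subtype.ext h)
    have hgU : ∀ n, g n ∈ U := fun n => (f n).2
    set G : ℕ → Finset ℕ+ := fun n => (Finset.range n).image g with hGdef
    have hGU : ∀ n, ↑(G n) ⊆ U := by
      intro n x hx
      simp only [hGdef, Finset.coe_image, Set.mem_image, Finset.coe_range,
        Set.mem_Iio] at hx
      obtain ⟨i, _, rfl⟩ := hx
      exact hgU i
    have hG : ∀ n, G n ∈ kUnionS S (k+1) := fun n => hcon _ (hGU n)
    choose B hB C hC hBC using hG
    set 𝒰 : Ultrafilter ℕ := Filter.hyperfilter ℕ with h𝒰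
    set A : Set ℕ := {i | {n | g i ∈ B n} ∈ 𝒰} with hA
    by_cases hAinf : A.Infinite
    · have hUA : (g '' A).Infinite := hAinf.image hginj.injOn
      obtain ⟨D, hDsub, hDnot⟩ := hS (g '' A) hUA
      apply hDnot
      have hmem : ∀ d ∈ (D : Set ℕ+), {n | d ∈ B n} ∈ 𝒰 := by
        intro d hd
        obtain ⟨i, hiA, rfl⟩ := hDsub hd
        exact hiA
      have hint : (⋂ d ∈ (D : Set ℕ+), {n | d ∈ B n}) ∈ 𝒰 :=
        (Filter.biInter_mem D.finite_toSet).2 hmem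
      obtain ⟨n, hn⟩ := Filter.nonempty_of_mem hint
      refine hher _ (hB n) _ (fun d hd => ?_)
      exact Set.mem_iInter₂.mp hn d hd
    · have hAc : Aᶜ.Infinite := (Set.not_infinite.mp hAinf).infinite_compl
      have hC𝒰 : ∀ i ∈ Aᶜ, {n | g i ∈ C n} ∈ 𝒰 := by
        intro i hi
        have h1 : {n | g i ∈ B n}ᶜ ∈ 𝒰 := Ultrafilter.compl_mem_iff_notMem.mpr hi
        have h2 : {n : ℕ | i < n} ∈ 𝒰 := by
          rw [h𝒰]
          apply Filter.mem_hyperfilter_of_finite_compl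
          apply (Set.finite_Iic i).subset
          intro n hn
          simp only [Set.mem_compl_iff, Set.mem_setOf_eq, not_lt] at hn
          exact hn
        filter_upwards [h1, h2] with n hn1 hn2
        have hmem : g i ∈ G n := by
          simp only [hGdef, Finset.mem_image, Finset.mem_range]
          exact ⟨i, hn2, rfl⟩
        rw [hBC n] at hmem
        rcases Finset.mem_union.mp hmem with h | h
        · exact absurd h hn1
        · exact h
      have hUAc : (g '' Aᶜ).Infinite := hAc.image hginj.injOn
      obtain ⟨D, hDsub, hDnot⟩ := ih (g '' Aᶜ) hUAc
      apply hDnot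
      have hmem : ∀ d ∈ (D : Set ℕ+), {n | d ∈ C n} ∈ 𝒰 := by
        intro d hd
        obtain ⟨i, hiA, rfl⟩ := hDsub hd
        exact hC𝒰 i hiA
      have hint : (⋂ d ∈ (D : Set ℕ+), {n | d ∈ C n}) ∈ 𝒰 :=
        (Filter.biInter_mem D.finite_toSet).2 hmem
      obtain ⟨n, hn⟩ := Filter.nonempty_of_mem hint
      refine kUnionS_hered S hher k _ (hC n) _ (fun d hd => ?_)
      exact Set.mem_iInter₂.mp hn d hd

lemma schreier_hered (S : Set (Finset ℕ+)) (hher : ∀ E ∈ S, ∀ F ⊆ E, F ∈ S) :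
    ∀ E ∈ schreierSucc S, ∀ F ⊆ E, F ∈ schreierSucc S := by
  intro E hE F hFE
  rcases Finset.eq_empty_or_nonempty F with rfl | hFne
  · exact Set.mem_insert _ _
  rcases hE with rfl | ⟨m, hm, Es, hEsS, hEsne, hord, hfirst, rfl⟩
  · rw [Finset.subset_empty] at hFE
    exact absurd hFE hFne.ne_empty
  classical
  set T : Finset (Fin m) := Finset.univ.filter (fun i => (Es i ∩ F).Nonempty) with hT
  have hTmem : ∀ i, i ∈ T ↔ (Es i ∩ F).Nonempty := by
    intro i; simp [hT]
  have hTne : T.Nonempty := by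
    obtain ⟨x, hx⟩ := hFne
    have hx' := hFE hx
    rw [Finset.mem_biUnion] at hx'
    obtain ⟨i, _, hxi⟩ := hx'
    exact ⟨i, (hTmem i).mpr ⟨x, Finset.mem_inter.2 ⟨hxi, hx⟩⟩⟩
  have hm' : 0 < T.card := Finset.card_pos.2 hTne
  set e := T.orderIsoOfFin rfl with he
  have hmono : ∀ i j : Fin T.card, i < j → ((e i : Fin m) < (e j : Fin m)) := by
    intro i j hij
    exact e.strictMono hij
  refine Set.mem_insert_iff.2 (Or.inr ⟨T.card, hm', fun j => Es (e j) ∩ F,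
    fun j => hher _ (hEsS _) _ Finset.inter_subset_left,
    fun j => (hTmem _).mp (e j).2, ?_, ?_, ?_⟩)
  · intro i j hij p hp q hq
    exact hord _ _ (hmono i j hij) p (Finset.mem_inter.mp hp).1 q (Finset.mem_inter.mp hq).1
  · intro p hp
    have hpEs : p ∈ Es (e ⟨0, hm'⟩) := (Finset.mem_inter.mp hp).1
    have hcard : T.card ≤ m := by
      have := Finset.card_le_univ T
      simpa using this
    rcases eq_or_lt_of_le (show (⟨0, hm⟩ : Fin m) ≤ (e ⟨0, hm'⟩ : Fin m) from
      Fin.mk_le_mk.mpr (Nat.zero_le _)) with heq | hlt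
    · rw [← heq] at hpEs
      exact le_trans hcard (hfirst p hpEs)
    · obtain ⟨q, hq⟩ := hEsne ⟨0, hm⟩
      have hqp : q < p := hord _ _ hlt q hq p hpEs
      have h1 : m ≤ (q : ℕ) := hfirst q hq
      have h2 : (q : ℕ) < (p : ℕ) := hqp
      omega
  · ext x
    simp only [Finset.mem_biUnion, Finset.mem_univ, true_and, Finset.mem_inter]
    constructor
    · intro hx
      have hx' := hFE hx
      rw [Finset.mem_biUnion] at hx'
      obtain ⟨i, _, hxi⟩ := hx'
      have hiT : i ∈ T := (hTmem i).mpr ⟨x, Finset.mem_inter.2 ⟨hxi, hx⟩⟩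
      refine ⟨e.symm ⟨i, hiT⟩, ?_, hx⟩
      have : e (e.symm ⟨i, hiT⟩) = ⟨i, hiT⟩ := e.apply_symm_apply _
      rw [this]
      exact hxi
    · rintro ⟨j, _, hx⟩
      exact hx

lemma schreier_spread (S : Set (Finset ℕ+)) (hspread : IsSpreadingP S) :
    IsSpreadingP (schreierSucc S) := by
  classical
  intro E hE f hf hle
  rcases hE with rfl | ⟨m, hm, Es, hEsS, hEsne, hord, hfirst, rfl⟩
  · simp only [Finset.image_empty]
    exact Set.mem_insert _ _
  have hsub : ∀ i, Es i ⊆ Finset.univ.biUnion Es := fun i =>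
    Finset.subset_biUnion_of_mem Es (Finset.mem_univ i)
  refine Set.mem_insert_iff.2 (Or.inr ⟨m, hm, fun i => (Es i).image f,
    ?_, fun i => (hEsne i).image f, ?_, ?_, ?_⟩)
  · intro i
    refine hspread _ (hEsS i) f (hf.mono ?_) (fun p hp => hle p (hsub i hp))
    exact Finset.coe_subset.mpr (hsub i)
  · intro i j hij p' hp' q' hq'
    rw [Finset.mem_image] at hp' hq'
    obtain ⟨p, hp, rfl⟩ := hp'
    obtain ⟨q, hq, rfl⟩ := hq'
    exact hf (hsub i hp) (hsub j hq) (hord i j hij p hp q hq)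
  · intro p' hp'
    rw [Finset.mem_image] at hp'
    obtain ⟨p, hp, rfl⟩ := hp'
    have h1 : m ≤ (p : ℕ) := hfirst p hp
    have h2 : p ≤ f p := hle p (hsub _ hp)
    have h3 : (p : ℕ) ≤ (f p : ℕ) := h2
    omega
  · ext x
    simp only [Finset.mem_image, Finset.mem_biUnion, Finset.mem_univ, true_and]
    constructor
    · rintro ⟨p, ⟨i, hpi⟩, rfl⟩
      exact ⟨i, p, hpi, rfl⟩
    · rintro ⟨i, p, hpi, rfl⟩
      exact ⟨p, ⟨i, hpi⟩, rfl⟩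

/-- The successor step of the Schreier construction preserves heredity, spreading, and the
absence of strictly ascending chains. -/
theorem schreierSucc_preserves_properties (S : Set (Finset ℕ+))
    (hher : ∀ E ∈ S, ∀ F ⊆ E, F ∈ S)
    (hspread : IsSpreadingP S)
    (hempty : (∅ : Finset ℕ+) ∈ S) (hsing : ∀ n : ℕ+, ({n} : Finset ℕ+) ∈ S)
    (hchain : ¬∃ E : ℕ → Finset ℕ+, (∀ i, E i ∈ S) ∧ ∀ i, E i ⊂ E (i + 1)) :
    (∀ E ∈ schreierSucc S, ∀ F ⊆ E, F ∈ schreierSucc S) ∧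
    IsSpreadingP (schreierSucc S) ∧
    ¬∃ E : ℕ → Finset ℕ+, (∀ i, E i ∈ schreierSucc S) ∧ ∀ i, E i ⊂ E (i + 1) := by
  refine ⟨schreier_hered S hher, schreier_spread S hspread, ?_⟩
  rintro ⟨E, hES, hEchain⟩
  have hmono : ∀ i j, i ≤ j → E i ⊆ E j := by
    intro i j hij
    induction hij with
    | refl => exact subset_refl _
    | @step j' h ih =>
      exact ih.trans (hEchain j').subset
  have hcard : ∀ n, n ≤ (E n).card := by
    intro n
    induction n with
    | zero => exact Nat.zero_le _
    | succ n ih =>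
      have := Finset.card_lt_card (hEchain n)
      omega
  set U : Set ℕ+ := ⋃ i, ↑(E i) with hU
  have hUinf : U.Infinite := by
    by_contra h
    rw [Set.not_infinite] at h
    have hsub : ∀ n, E n ⊆ h.toFinset := by
      intro n x hx
      rw [Set.Finite.mem_toFinset]
      exact Set.mem_iUnion.2 ⟨n, hx⟩
    have h2 := Finset.card_le_card (hsub (h.toFinset.card + 1))
    have h3 := hcard (h.toFinset.card + 1)
    omega
  have hfin_sub : ∀ D : Finset ℕ+, ↑D ⊆ U → ∃ N, D ⊆ E N := by
    intro D
    induction D using Finset.induction_on with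
    | empty => exact fun _ => ⟨0, Finset.empty_subset _⟩
    | @insert a s ha ih =>
      intro h
      obtain ⟨N, hN⟩ := ih (fun x hx =>
        h (Finset.mem_coe.mpr (Finset.mem_insert_of_mem (Finset.mem_coe.mp hx))))
      obtain ⟨M, hM⟩ := Set.mem_iUnion.mp (h (Finset.mem_coe.mpr (Finset.mem_insert_self a s)))
      refine ⟨max N M, Finset.insert_subset (hmono M _ (le_max_right N M) hM)
        (hN.trans (hmono N _ (le_max_left N M)))⟩
  have hallS' : ∀ D : Finset ℕ+, ↑D ⊆ U → D ∈ schreierSucc S := by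
    intro D hD
    obtain ⟨N, hN⟩ := hfin_sub D hD
    exact schreier_hered S hher _ (hES N) _ hN
  obtain ⟨u0, hu0⟩ := hUinf.nonempty
  obtain ⟨D, hDU, hDnot⟩ :=
    noInfP_kUnionS S hher (noInfP_of_noChain S hchain) (u0 : ℕ) U hUinf
  apply hDnot
  have hD' : insert u0 D ∈ schreierSucc S := by
    apply hallS'
    intro x hx
    rcases Finset.mem_insert.mp (by exact_mod_cast hx) with rfl | hxD
    · exact hu0
    · exact hDU hxD
  rcases hD' with h0 | ⟨m, hm, Es, hEsS, hEsne, hord, hfirst, hEq⟩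
  · exact absurd h0 (Finset.insert_ne_empty _ _)
  have hu0mem : u0 ∈ Finset.univ.biUnion Es := hEq ▸ Finset.mem_insert_self u0 D
  rw [Finset.mem_biUnion] at hu0mem
  obtain ⟨i, _, hi⟩ := hu0mem
  have hmu0 : m ≤ (u0 : ℕ) := by
    have hle0 : (⟨0, hm⟩ : Fin m) ≤ i := by
      rcases i with ⟨iv, hiv⟩
      exact Fin.mk_le_mk.mpr (Nat.zero_le _)
    rcases eq_or_lt_of_le hle0 with heq | hlt
    · rw [← heq] at hi
      exact hfirst u0 hi
    · obtain ⟨q, hq⟩ := hEsne ⟨0, hm⟩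
      have hqp : q < u0 := hord _ _ hlt q hq u0 hi
      have h1 : m ≤ (q : ℕ) := hfirst q hq
      have h2 : (q : ℕ) < (u0 : ℕ) := hqp
      omega
  have hmem_k : insert u0 D ∈ kUnionS S ((u0 : ℕ)) := by
    have h1 : Finset.univ.biUnion Es ∈ kUnionS S m := by
      have := biUnion_mem_kUnionS S Finset.univ Es (fun i _ => hEsS i)
      rwa [Finset.card_univ, Fintype.card_fin] at this
    rw [hEq]
    exact kUnionS_mono S hempty hmu0 h1
  exact kUnionS_hered S hher _ _ hmem_k D (Finset.subset_insert u0 D)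

end
end

section
/- Lemma 5.3: Let X and Z be Banach spaces, let (F_n) be a bimonotone FDD of Z with coordinate projections P_n, and let Q : Z → X be a bounded linear map such that B_X ⊆ Q(C·B_Z) for some C > 0, where B_X and B_Z are the closed unit balls. If (x_n) is a sequence in X with ‖x_n‖ = 1 for all n converging weakly to 0, then for every ε > 0 and every n ∈ ℕ there exist N ∈ ℕ and z ∈ Z with ‖z‖ ≤ 2C, P_{[1,n]} z = 0, and ‖Qz − x_N‖ < ε. -/
open Filter Topology Metric

noncomputable section

/-!  Auxiliary lemmas -/


lemma FDD.proj_proj_s18 {Z : Type*} [NormedAddCommGroup Z] [NormedSpace ℝ Z] (F : FDD Z) (i j : ℕ) (z : Z) :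
    F.proj i (F.proj j z) = if i = j then F.proj j z else 0 := by
  have h := F.rep_unique (F.proj j z) (fun n => if n = j then F.proj j z else 0)
    (fun n => by
      show (if n = j then F.proj j z else 0) ∈ F.E n
      split
      · next h => subst h; exact F.proj_mem n z
      · exact Submodule.zero_mem _)
    ?_ i
  · exact h.symm
  · have : ∀ N ≥ j + 1,
        (∑ n ∈ Finset.range N, if n = j then F.proj j z else 0) = F.proj j z := by
      intro N hN
      rw [Finset.sum_ite_eq' (Finset.range N) j (fun _ => F.proj j z)]
      simp [Finset.mem_range, Nat.lt_of_succ_le hN]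
    exact tendsto_atTop_of_eventually_const this

lemma FDD.norm_partial_le {Z : Type*} [NormedAddCommGroup Z] [NormedSpace ℝ Z] (F : FDD Z) (hbm : F.Bimonotone) (n : ℕ) (z : Z) :
    ‖∑ i ∈ Finset.range n, F.proj i z‖ ≤ ‖z‖ := by
  rcases Nat.eq_zero_or_pos n with rfl | hn
  · simp
  · have hr : Finset.range n = Finset.Icc 0 (n - 1) := by
      ext i; simp [Finset.mem_range, Finset.mem_Icc, Nat.lt_iff_le_pred hn]
    have h := hbm 0 (n - 1)
    calc ‖∑ i ∈ Finset.range n, F.proj i z‖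
        = ‖(∑ i ∈ Finset.Icc 0 (n-1), F.proj i) z‖ := by
          rw [hr, ContinuousLinearMap.sum_apply]
      _ ≤ ‖∑ i ∈ Finset.Icc 0 (n-1), F.proj i‖ * ‖z‖ :=
          (∑ i ∈ Finset.Icc 0 (n-1), F.proj i).le_opNorm z
      _ ≤ 1 * ‖z‖ := by gcongr
      _ = ‖z‖ := one_mul _

lemma FDD.norm_tail_le {Z : Type*} [NormedAddCommGroup Z] [NormedSpace ℝ Z] (F : FDD Z) (hbm : F.Bimonotone) (n : ℕ) (z : Z) :
    ‖z - ∑ i ∈ Finset.range n, F.proj i z‖ ≤ ‖z‖ := by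
  have hts : Tendsto (fun m => ‖(∑ i ∈ Finset.range m, F.proj i z)
      - ∑ i ∈ Finset.range n, F.proj i z‖) atTop
      (𝓝 ‖z - ∑ i ∈ Finset.range n, F.proj i z‖) :=
    (((F.proj_sum z).sub tendsto_const_nhds).norm)
  refine le_of_tendsto hts (eventually_atTop.2 ⟨n + 1, fun m hm => ?_⟩)
  have hnm : n ≤ m := le_trans (Nat.le_succ n) hm
  have : (∑ i ∈ Finset.range m, F.proj i z) - ∑ i ∈ Finset.range n, F.proj i z
      = ∑ i ∈ Finset.Icc n (m - 1), F.proj i z := by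
    rw [← Finset.sum_Ico_eq_sub _ hnm]
    congr 1
    ext i; simp [Finset.mem_Ico, Finset.mem_Icc, Nat.lt_iff_le_pred (lt_of_lt_of_le (Nat.succ_pos n) hm)]
  rw [this]
  calc ‖∑ i ∈ Finset.Icc n (m-1), F.proj i z‖
      = ‖(∑ i ∈ Finset.Icc n (m-1), F.proj i) z‖ := by rw [ContinuousLinearMap.sum_apply]
    _ ≤ ‖∑ i ∈ Finset.Icc n (m-1), F.proj i‖ * ‖z‖ := ContinuousLinearMap.le_opNorm _ z
    _ ≤ 1 * ‖z‖ := by gcongr; exact hbm n (m-1)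
    _ = ‖z‖ := one_mul _


/-- **Lemma 5.3.** -/
theorem quotient_skipped_perturbation
    {X Z : Type*} [NormedAddCommGroup X] [NormedSpace ℝ X] [CompleteSpace X]
    [NormedAddCommGroup Z] [NormedSpace ℝ Z] [CompleteSpace Z]
    (F : FDD Z) (hbm : F.Bimonotone)
    (Q : Z →L[ℝ] X) (C : ℝ) (hC : 0 < C)
    (hQ : Metric.closedBall (0 : X) 1 ⊆ ⇑Q '' Metric.closedBall (0 : Z) C)
    (x : ℕ → X) (hx : ∀ n, ‖x n‖ = 1)
    (hwn : ∀ f : X →L[ℝ] ℝ, Filter.Tendsto (fun n => f (x n)) Filter.atTop (nhds 0)) :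
    ∀ ε : ℝ, 0 < ε → ∀ n : ℕ, ∃ (N : ℕ) (z : Z),
      ‖z‖ ≤ 2 * C ∧ (∑ i ∈ Finset.range n, F.proj i z) = 0 ∧ ‖Q z - x N‖ < ε := by
  intro ε hε n
  -- choose preimages
  have hxball : ∀ N, x N ∈ Metric.closedBall (0 : X) 1 := fun N => by
    simp [Metric.mem_closedBall, dist_zero_right, hx N, le_refl]
  choose zz hzz hQzz using fun N => hQ (hxball N)
  have hzzC : ∀ N, ‖zz N‖ ≤ C := fun N => by
    simpa [Metric.mem_closedBall, dist_zero_right] using hzz N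
  -- the "head" projection and "tail"
  set P : Z → Z := fun z => ∑ i ∈ Finset.range n, F.proj i z with hP
  set w : ℕ → Z := fun N => zz N - P (zz N) with hw
  have hwC : ∀ N, ‖w N‖ ≤ C := fun N =>
    le_trans (F.norm_tail_le hbm n (zz N)) (hzzC N)
  have hPC : ∀ N, ‖P (zz N)‖ ≤ C := fun N =>
    le_trans (F.norm_partial_le hbm n (zz N)) (hzzC N)
  -- w N is killed by every proj i, i < n
  have hker : ∀ (z : Z) (i : ℕ), i < n → F.proj i (z - P z) = 0 := by
    intro z i hi
    have : F.proj i (P z) = F.proj i z := by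
      rw [hP]
      simp only [map_sum]
      rw [Finset.sum_congr rfl (fun j _ => F.proj_proj_s18 i j z)]
      rw [Finset.sum_ite_eq (Finset.range n) i (fun j => F.proj j z)]
      simp [Finset.mem_range.2 hi]
    simp [map_sub, this]
  -- the convex set T and S = Q '' T
  set T : Set Z := {u | ‖u‖ ≤ C ∧ ∀ i < n, F.proj i u = 0} with hT
  have hwT : ∀ N, w N ∈ T := fun N => ⟨hwC N, fun i hi => hker (zz N) i hi⟩
  have hTconv : Convex ℝ T := by
    intro a ha b hb s t hs ht hst
    refine ⟨?_, ?_⟩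
    · calc ‖s • a + t • b‖ ≤ ‖s • a‖ + ‖t • b‖ := norm_add_le _ _
        _ = s * ‖a‖ + t * ‖b‖ := by rw [norm_smul, norm_smul, Real.norm_of_nonneg hs, Real.norm_of_nonneg ht]
        _ ≤ s * C + t * C := by gcongr; exacts [ha.1, hb.1]
        _ = C := by rw [← add_mul, hst, one_mul]
    · intro i hi
      simp [map_add, map_smul, ha.2 i hi, hb.2 i hi]
  set S : Set X := ⇑Q '' T with hS
  have hSconv : Convex ℝ S := by
    have := hTconv.linear_image (Q : Z →ₗ[ℝ] X)
    simpa using this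
  -- compactness: P (zz N) lives in a finite-dimensional subspace
  set G : Submodule ℝ Z := (Finset.range n).sup F.E with hG
  haveI : ∀ i, FiniteDimensional ℝ (F.E i) := F.finiteDim
  haveI : FiniteDimensional ℝ G := Submodule.finiteDimensional_finset_sup _ _
  have hPG : ∀ N, P (zz N) ∈ G := fun N =>
    Submodule.sum_mem _ (fun i hi => (Finset.le_sup hi : F.E i ≤ G) (F.proj_mem i (zz N)))
  set g : ℕ → G := fun N => ⟨P (zz N), hPG N⟩ with hg
  have hgball : ∀ N, g N ∈ Metric.closedBall (0 : G) C := fun N => by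
    simp only [Metric.mem_closedBall, dist_zero_right]
    exact hPC N
  obtain ⟨a, -, φ, hφ, hga⟩ := tendsto_subseq_of_bounded
    (Metric.isBounded_closedBall (x := (0 : G)) (r := C)) hgball
  -- so P (zz (φ k)) → a in Z
  have hPa : Tendsto (fun k => P (zz (φ k))) atTop (𝓝 (a : Z)) := by
    have : Continuous ((↑) : G → Z) := continuous_subtype_val
    exact (this.tendsto a).comp hga
  set v : X := Q a with hv
  have hQPa : Tendsto (fun k => Q (P (zz (φ k)))) atTop (𝓝 v) :=
    (Q.continuous.tendsto _).comp hPa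
  -- weak limit of Q (w (φ k)) is -v; by Hahn–Banach, -v ∈ closure S
  have hmem : -v ∈ closure S := by
    by_contra hnot
    obtain ⟨f, u, hfu, huv⟩ := geometric_hahn_banach_closed_point
      (hSconv.closure) isClosed_closure hnot
    have h1 : Tendsto (fun k => f (Q (w (φ k)))) atTop (𝓝 (f (-v))) := by
      have heq : ∀ k, f (Q (w (φ k))) = f (x (φ k)) - f (Q (P (zz (φ k)))) := by
        intro k
        simp only [hw, map_sub, hQzz]
      simp only [heq]
      have h2 : Tendsto (fun k => f (x (φ k))) atTop (𝓝 0) :=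
        (hwn f).comp hφ.tendsto_atTop
      have h3 : Tendsto (fun k => f (Q (P (zz (φ k))))) atTop (𝓝 (f v)) :=
        (f.continuous.tendsto _).comp hQPa
      have := h2.sub h3
      simpa using this
    have : ∀ᶠ k in atTop, u < f (Q (w (φ k))) :=
      h1.eventually (eventually_gt_nhds huv)
    obtain ⟨k, hk⟩ := this.exists
    exact absurd (hfu _ (subset_closure ⟨w (φ k), hwT (φ k), rfl⟩)) (not_lt.2 hk.le)
  -- pick approximants
  obtain ⟨s₀, hs₀S, hs₀⟩ := Metric.mem_closure_iff.1 hmem (ε / 2) (half_pos hε)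
  obtain ⟨u₀, hu₀T, hQu₀⟩ := hs₀S
  have hclose : ∀ᶠ k in atTop, ‖Q (P (zz (φ k))) - v‖ < ε / 2 := by
    have := hQPa
    rw [Metric.tendsto_atTop] at this
    obtain ⟨k₀, hk₀⟩ := this (ε / 2) (half_pos hε)
    exact eventually_atTop.2 ⟨k₀, fun k hk => by simpa [dist_eq_norm] using hk₀ k hk⟩
  obtain ⟨k, hk⟩ := hclose.exists
  refine ⟨φ k, w (φ k) - u₀, ?_, ?_, ?_⟩
  · calc ‖w (φ k) - u₀‖ ≤ ‖w (φ k)‖ + ‖u₀‖ := norm_sub_le _ _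
      _ ≤ C + C := add_le_add (hwC _) hu₀T.1
      _ = 2 * C := by ring
  · have : ∀ i ∈ Finset.range n, F.proj i (w (φ k) - u₀) = 0 := by
      intro i hi
      rw [map_sub, hker (zz (φ k)) i (Finset.mem_range.1 hi),
        hu₀T.2 i (Finset.mem_range.1 hi), sub_zero]
    exact Finset.sum_eq_zero this
  · have key : Q (w (φ k) - u₀) - x (φ k)
        = (v - Q (P (zz (φ k)))) + (-v - Q u₀) := by
      simp only [hw, map_sub, hQzz]
      abel
    rw [key]
    have h2 : ‖-v - Q u₀‖ < ε / 2 := by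
      rw [← hQu₀] at hs₀
      rw [dist_eq_norm] at hs₀
      simpa [sub_eq_add_neg] using hs₀
    calc ‖(v - Q (P (zz (φ k)))) + (-v - Q u₀)‖
        ≤ ‖v - Q (P (zz (φ k)))‖ + ‖-v - Q u₀‖ := norm_add_le _ _
      _ < ε / 2 + ε / 2 := by
          apply add_lt_add _ h2
          rw [norm_sub_rev]; exact hk
      _ = ε := add_halves ε


end
end
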